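/- arXiv:math/0404474 — 13 statements merged into one kernel-verified Lean document; each statement's English description precedes it below -/
import Mathlib

section
/- Let q be a homogeneous polynomial of degree n in n real variables with nonnegative real coefficients, and let (α₁,...,αₙ) be a vector with positive entries such that ∑ᵢ |αᵢ·(∂q/∂αᵢ)(α)/q(α) − 1|² ≤ 1/n. Then for every subset S ⊆ {1,...,n}, there exists an exponent vector (r₁,...,rₙ) in the support of q with ∑_{i∈S} rᵢ ≥ |S|. -/
open MvPolynomial

private lemma aux_pderiv {n : ℕ} (q : MvPolynomial (Fin n) ℝ) (α : Fin n → ℝ) (i : Fin n) :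
    α i * eval α (pderiv i q) =
      ∑ r ∈ q.support, q.coeff r * (r i : ℝ) * ∏ j, α j ^ r j := by
  conv_lhs => rw [q.as_sum, map_sum, map_sum]
  rw [Finset.mul_sum]
  refine Finset.sum_congr rfl fun r _ => ?_
  rw [pderiv_monomial, eval_monomial, Finsupp.prod_pow]
  rcases Nat.eq_zero_or_pos (r i) with h | h
  · simp [h]
  · have hle : Finsupp.single i 1 ≤ r := Finsupp.single_le_iff.mpr h
    obtain ⟨w, hw⟩ : ∃ w : Fin n →₀ ℕ, r - Finsupp.single i 1 = w := ⟨_, rfl⟩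
    rw [hw]
    have h1 : ∀ j, (Finsupp.single i 1 : Fin n →₀ ℕ) j + w j = r j := fun j => by
      rw [← hw, ← Finsupp.add_apply, add_tsub_cancel_of_le hle]
    have h2 : ∏ j, α j ^ ((Finsupp.single i 1 : Fin n →₀ ℕ) j) = α i := by
      rw [Finset.prod_eq_single i (fun j _ hj => by
        rw [Finsupp.single_eq_of_ne hj, pow_zero])
        (fun hi => absurd (Finset.mem_univ i) hi)]
      rw [Finsupp.single_eq_same, pow_one]
    have h3 : α i * ∏ j, α j ^ w j = ∏ j, α j ^ r j := by
      rw [← h2, ← Finset.prod_mul_distrib]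
      exact Finset.prod_congr rfl fun j _ => by rw [← pow_add, h1 j]
    linear_combination (q.coeff r * (r i : ℝ)) * h3

private lemma aux_euler {n : ℕ} (q : MvPolynomial (Fin n) ℝ) (hq : q.IsHomogeneous n)
    (α : Fin n → ℝ) :
    ∑ i, α i * eval α (pderiv i q) = (n : ℝ) * eval α q := by
  have hdeg : ∀ r ∈ q.support, (∑ i, (r i : ℝ)) = (n : ℝ) := by
    intro r hr
    have h1 : Finsupp.degree r = n := by
      rw [Finsupp.degree_eq_weight_one]
      exact hq (MvPolynomial.mem_support_iff.mp hr)
    have h2 : ∑ i, r i = Finsupp.degree r := by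
      rw [Finsupp.degree]
      exact (Finset.sum_subset (Finset.subset_univ _)
        (fun x _ hx => Finsupp.notMem_support_iff.mp hx)).symm
    rw [← Nat.cast_sum, h2, h1]
  simp_rw [aux_pderiv q α]
  rw [Finset.sum_comm, eval_eq' α q, Finset.mul_sum]
  refine Finset.sum_congr rfl fun r hr => ?_
  rw [← Finset.sum_mul, ← Finset.mul_sum, hdeg r hr]
  ring

theorem stmt0 (n : ℕ) (hn : 0 < n) (q : MvPolynomial (Fin n) ℝ)
    (hq : q.IsHomogeneous n) (hcoeff : ∀ m, 0 ≤ q.coeff m)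
    (α : Fin n → ℝ) (hα : ∀ i, 0 < α i) (hpos : 0 < eval α q)
    (hds : ∑ i, (α i * eval α (pderiv i q) / eval α q - 1) ^ 2 ≤ 1 / (n : ℝ)) :
    ∀ S : Finset (Fin n), ∃ r ∈ q.support, (S.card : ℕ) ≤ ∑ i ∈ S, r i := by
  intro S
  by_contra hcon
  push_neg at hcon
  set E := eval α q with hE
  set β : Fin n → ℝ := fun i => α i * eval α (pderiv i q) / E with hβ
  have hE0 : (0 : ℝ) < E := hpos
  have key : ∑ i ∈ S, α i * eval α (pderiv i q) ≤ ((S.card : ℝ) - 1) * E := by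
    calc ∑ i ∈ S, α i * eval α (pderiv i q)
        = ∑ r ∈ q.support, q.coeff r * (∑ i ∈ S, (r i : ℝ)) * ∏ j, α j ^ r j := by
          simp_rw [aux_pderiv q α]
          rw [Finset.sum_comm]
          refine Finset.sum_congr rfl fun r _ => ?_
          rw [← Finset.sum_mul, ← Finset.mul_sum]
      _ ≤ ∑ r ∈ q.support, q.coeff r * ((S.card : ℝ) - 1) * ∏ j, α j ^ r j := by
          refine Finset.sum_le_sum fun r hr => ?_
          have h1 : (∑ i ∈ S, (r i : ℝ)) ≤ (S.card : ℝ) - 1 := by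
            have h2 : (∑ i ∈ S, r i) + 1 ≤ S.card := hcon r hr
            have h3 : ((∑ i ∈ S, r i : ℕ) : ℝ) + 1 ≤ (S.card : ℝ) := by exact_mod_cast h2
            rw [Nat.cast_sum] at h3
            linarith
          have hprod : (0 : ℝ) ≤ ∏ j, α j ^ r j :=
            Finset.prod_nonneg fun j _ => pow_nonneg (hα j).le _
          exact mul_le_mul_of_nonneg_right
            (mul_le_mul_of_nonneg_left h1 (hcoeff r)) hprod
      _ = ((S.card : ℝ) - 1) * E := by
          rw [hE, eval_eq' α q, Finset.mul_sum]
          exact Finset.sum_congr rfl fun r _ => by ring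
  have hβsum : ∑ i ∈ S, (β i - 1) ≤ -1 := by
    have h0 : ∑ i ∈ S, (β i - 1)
        = (∑ i ∈ S, α i * eval α (pderiv i q)) / E - S.card := by
      rw [Finset.sum_sub_distrib, ← Finset.sum_div]
      simp [hβ]
    have h4 : (∑ i ∈ S, α i * eval α (pderiv i q)) / E ≤ (S.card : ℝ) - 1 := by
      rw [div_le_iff₀ hE0]; linarith [key]
    rw [h0]; linarith
  have hsq : (1 : ℝ) ≤ (∑ i ∈ S, (β i - 1)) ^ 2 := by nlinarith [hβsum]
  have hCS := Finset.sum_mul_sq_le_sq_mul_sq S (fun i => β i - 1) (fun _ => 1)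
  simp only [mul_one, one_pow, Finset.sum_const, nsmul_eq_mul] at hCS
  have hsub : ∑ i ∈ S, (β i - 1) ^ 2 ≤ 1 / (n : ℝ) := by
    refine le_trans ?_ hds
    exact Finset.sum_le_sum_of_subset_of_nonneg (Finset.subset_univ S)
      (fun i _ _ => sq_nonneg _)
  have hnS : (n : ℝ) ≤ S.card := by
    have h1 : (1 : ℝ) ≤ (∑ i ∈ S, (β i - 1) ^ 2) * S.card := le_trans hsq hCS
    have h2 : (1 : ℝ) ≤ (1 / n) * S.card :=
      le_trans h1 (mul_le_mul_of_nonneg_right hsub (by positivity))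
    have hn' : (0 : ℝ) < n := by exact_mod_cast hn
    rw [div_mul_eq_mul_div, one_mul, le_div_iff₀ hn', one_mul] at h2
    exact h2
  have hScard : S.card = n := by
    have h1 : S.card ≤ n := by simpa using Finset.card_le_card (Finset.subset_univ S)
    have h2 : n ≤ S.card := by exact_mod_cast hnS
    omega
  have hSuniv : S = Finset.univ := Finset.eq_univ_of_card S (by simpa using hScard)
  have heuler := aux_euler q hq α
  have hzero : ∑ i ∈ S, (β i - 1) = 0 := by
    rw [hSuniv, Finset.sum_sub_distrib]
    simp only [hβ]
    rw [← Finset.sum_div, heuler, mul_div_assoc, div_self hE0.ne', Finset.sum_const, Finset.card_univ,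
      Fintype.card_fin, nsmul_eq_mul]
    ring
  linarith [hβsum, hzero]
end

section
/- For any homogeneous polynomial p of degree n in n variables (over ℝ or ℂ), the mixed partial derivative ∂ⁿp/∂x₁···∂xₙ equals 2^{-(n-1)} ∑_{b₂,...,bₙ ∈ {−1,+1}} p(1, b₂, ..., bₙ) · ∏_{i=2}^{n} bᵢ. -/
open MvPolynomial

lemma aux_sum (n : ℕ) (hn : 0 < n) (m : Fin n → ℕ) (hm : ∑ i, m i = n) :
    ∑ b ∈ Finset.univ.filter (fun b : Fin n → Bool => b ⟨0, hn⟩ = true),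
      ((∏ i, (if b i then (1:ℝ) else -1) ^ m i) *
        ∏ i ∈ Finset.univ.erase ⟨0, hn⟩, (if b i then (1:ℝ) else -1)) =
    if (∀ i, m i = 1) then 2 ^ (n - 1) else 0 := by
  set z : Fin n := ⟨0, hn⟩ with hz
  set F : (Fin n → Bool) → ℝ := fun b => ∏ i, (if b i then (1:ℝ) else -1) ^ (m i + 1)
    with hFdef
  have hstep1 : ∀ b ∈ Finset.univ.filter (fun b : Fin n → Bool => b z = true),
      (∏ i, (if b i then (1:ℝ) else -1) ^ m i) *
        ∏ i ∈ Finset.univ.erase z, (if b i then (1:ℝ) else -1) = F b := by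
    intro b hb
    simp only [Finset.mem_filter] at hb
    have hz1 : (if b z then (1:ℝ) else -1) = 1 := by rw [hb.2]; simp
    have herase : ∏ i ∈ Finset.univ.erase z, (if b i then (1:ℝ) else -1)
        = ∏ i, (if b i then (1:ℝ) else -1) := by
      rw [← Finset.prod_erase_mul Finset.univ _ (Finset.mem_univ z), hz1, mul_one]
    rw [herase, ← Finset.prod_mul_distrib, hFdef]
    exact Finset.prod_congr rfl fun i _ => (pow_succ _ _).symm
  rw [Finset.sum_congr rfl hstep1]
  have hn1 : ∀ b : Fin n → Bool, ((-1:ℝ)) ^ (∑ i, (m i + 1)) = 1 := by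
    intro b
    have : ∑ i, (m i + 1) = n + n := by
      rw [Finset.sum_add_distrib, hm]; simp
    rw [this, pow_add]
    rcases neg_one_pow_eq_or ℝ n with h | h <;> rw [h] <;> ring
  have hFneg : ∀ b : Fin n → Bool, F (fun i => !b i) = F b := by
    intro b
    have hneg : ∀ i, (if !b i then (1:ℝ) else -1) = -(if b i then (1:ℝ) else -1) := by
      intro i; cases hbi : b i <;> simp [hbi]
    calc F (fun i => !b i) = ∏ i, (-(if b i then (1:ℝ) else -1)) ^ (m i + 1) := by
          simp only [hFdef, hneg]
      _ = (∏ i, ((-1:ℝ)) ^ (m i + 1)) * ∏ i, (if b i then (1:ℝ) else -1) ^ (m i + 1) := by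
          rw [← Finset.prod_mul_distrib]; congr 1; funext i; ring
      _ = F b := by
          rw [Finset.prod_pow_eq_pow_sum, hn1 b, one_mul]
  have hsplit := Finset.sum_filter_add_sum_filter_not Finset.univ
    (fun b : Fin n → Bool => b z = true) F
  have heq2 : ∑ b ∈ Finset.univ.filter (fun b : Fin n → Bool => ¬ b z = true), F b
      = ∑ b ∈ Finset.univ.filter (fun b : Fin n → Bool => b z = true), F b := by
    apply Finset.sum_nbij' (i := fun b => fun i => !b i) (j := fun b => fun i => !b i)
    · intro a ha; simp only [Finset.mem_filter, Finset.mem_univ, true_and] at ha ⊢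
      simp [ha]
    · intro a ha; simp only [Finset.mem_filter, Finset.mem_univ, true_and] at ha ⊢
      simp [ha]
    · intro a _; funext i; simp
    · intro a _; funext i; simp
    · intro a _; exact (hFneg a).symm
  have htot : ∑ b : Fin n → Bool, F b
      = 2 * ∑ b ∈ Finset.univ.filter (fun b : Fin n → Bool => b z = true), F b := by
    rw [← hsplit, heq2]; ring
  have hprod : ∑ b : Fin n → Bool, F b
      = ∏ i : Fin n, ((1:ℝ) ^ (m i + 1) + (-1) ^ (m i + 1)) := by
    have h := Finset.prod_univ_sum (fun _ : Fin n => (Finset.univ : Finset Bool))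
      (fun i y => (if y then (1:ℝ) else -1) ^ (m i + 1))
    rw [Fintype.piFinset_univ] at h
    rw [← h]
    congr 1; funext i
    rw [Fintype.sum_bool]; simp
  by_cases hall : ∀ i, m i = 1
  · rw [if_pos hall]
    have hp2 : ∑ b : Fin n → Bool, F b = 2 ^ n := by
      rw [hprod]
      have : ∀ i : Fin n, ((1:ℝ) ^ (m i + 1) + (-1) ^ (m i + 1)) = 2 := by
        intro i; rw [hall i]; norm_num
      rw [Finset.prod_congr rfl (fun i _ => this i)]
      simp
    rw [hp2] at htot
    have h2n : (2:ℝ) ^ n = 2 * 2 ^ (n - 1) := by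
      rw [← pow_succ']; congr 1; omega
    rw [h2n] at htot
    linarith
  · rw [if_neg hall]
    have hex : ∃ j, Even (m j) := by
      by_contra hodd
      push_neg at hodd
      apply hall
      intro i
      have h1 : ∀ j : Fin n, 1 ≤ m j := by
        intro j
        have := Nat.odd_iff.mp (Nat.not_even_iff_odd.mp (hodd j))
        omega
      by_contra hne
      have h2 : 1 < m i := lt_of_le_of_ne (h1 i) (Ne.symm hne)
      have := Finset.sum_lt_sum (fun j _ => h1 j) ⟨i, Finset.mem_univ i, h2⟩
      rw [hm] at this
      simp at this
    obtain ⟨j, hj⟩ := hex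
    have hzero : ((1:ℝ) ^ (m j + 1) + (-1) ^ (m j + 1)) = 0 := by
      rw [(Even.add_one hj).neg_one_pow]; simp
    have hp0 : ∑ b : Fin n → Bool, F b = 0 := by
      rw [hprod]
      exact Finset.prod_eq_zero (Finset.mem_univ j) hzero
    rw [hp0] at htot
    linarith

theorem stmt1 (n : ℕ) (hn : 0 < n) (p : MvPolynomial (Fin n) ℝ)
    (hp : p.IsHomogeneous n) :
    p.coeff (Finsupp.equivFunOnFinite.symm fun _ => 1) =
      (1 / 2 ^ (n - 1) : ℝ) *
        ∑ b ∈ Finset.univ.filter (fun b : Fin n → Bool => b ⟨0, hn⟩ = true),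
          eval (fun i => if b i then (1 : ℝ) else -1) p *
            ∏ i ∈ Finset.univ.erase ⟨0, hn⟩, (if b i then (1 : ℝ) else -1) := by
  have hdeg : ∀ d ∈ p.support, ∑ i, (d : Fin n →₀ ℕ) i = n := by
    intro d hd
    have h := hp (MvPolynomial.mem_support_iff.mp hd)
    have h2 : ∑ i : Fin n, d i = ∑ i ∈ d.support, d i :=
      (Finset.sum_subset (Finset.subset_univ _)
        (fun i _ hni => Finsupp.notMem_support_iff.mp hni)).symm
    have h3 : (Finsupp.weight (1 : Fin n → ℕ)) d = ∑ i ∈ d.support, d i := by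
      simp [Finsupp.weight_apply, Finsupp.sum]
    rw [h2, ← h3]
    exact h
  have key : ∀ d ∈ p.support,
      ∑ b ∈ Finset.univ.filter (fun b : Fin n → Bool => b ⟨0, hn⟩ = true),
        ((∏ i, (if b i then (1:ℝ) else -1) ^ d i) *
          ∏ i ∈ Finset.univ.erase ⟨0, hn⟩, (if b i then (1:ℝ) else -1)) =
      if (∀ i, d i = 1) then 2 ^ (n - 1) else 0 :=
    fun d hd => aux_sum n hn (fun i => d i) (hdeg d hd)
  have hstep : ∑ b ∈ Finset.univ.filter (fun b : Fin n → Bool => b ⟨0, hn⟩ = true),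
        eval (fun i => if b i then (1 : ℝ) else -1) p *
          ∏ i ∈ Finset.univ.erase ⟨0, hn⟩, (if b i then (1 : ℝ) else -1)
      = ∑ d ∈ p.support, p.coeff d * (if (∀ i, d i = 1) then (2:ℝ) ^ (n - 1) else 0) := by
    have h1 : ∀ b : Fin n → Bool,
        eval (fun i => if b i then (1 : ℝ) else -1) p *
          ∏ i ∈ Finset.univ.erase ⟨0, hn⟩, (if b i then (1 : ℝ) else -1)
        = ∑ d ∈ p.support, p.coeff d *
            ((∏ i, (if b i then (1:ℝ) else -1) ^ d i) *
              ∏ i ∈ Finset.univ.erase ⟨0, hn⟩, (if b i then (1:ℝ) else -1)) := by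
      intro b
      rw [eval_eq', Finset.sum_mul]
      exact Finset.sum_congr rfl fun d _ => by ring
    rw [Finset.sum_congr rfl fun b _ => h1 b, Finset.sum_comm]
    refine Finset.sum_congr rfl fun d hd => ?_
    rw [← Finset.mul_sum, key d hd]
  rw [hstep]
  have hiff : ∀ d : Fin n →₀ ℕ,
      (∀ i, d i = 1) ↔ d = Finsupp.equivFunOnFinite.symm (fun _ => 1) := by
    intro d
    rw [Equiv.eq_symm_apply]
    constructor
    · intro h; funext i; exact h i
    · intro h i; exact congrFun h i
  rw [Finset.sum_congr rfl fun d _ => by rw [if_congr (hiff d) rfl rfl, mul_ite, mul_zero]]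
  rw [Finset.sum_ite_eq' p.support (Finsupp.equivFunOnFinite.symm fun _ => 1)
    (fun d => p.coeff d * (2:ℝ) ^ (n - 1))]
  by_cases hmem : (Finsupp.equivFunOnFinite.symm fun _ => (1:ℕ)) ∈ p.support
  · rw [if_pos hmem]
    have : (2:ℝ) ^ (n-1) ≠ 0 := by positivity
    field_simp
  · rw [if_neg hmem, MvPolynomial.notMem_support_iff.mp hmem, mul_zero]
end

section
/- For any homogeneous polynomial p of degree n in n variables, ∂ⁿp/∂x₁···∂xₙ = 2^{-n} ∑_{b₁,...,bₙ ∈ {−1,+1}} p(b₁, ..., bₙ) · ∏_{i=1}^{n} bᵢ (the polarization formula). -/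
open MvPolynomial

theorem stmt2 (n : ℕ) (p : MvPolynomial (Fin n) ℝ) (hp : p.IsHomogeneous n) :
    p.coeff (Finsupp.equivFunOnFinite.symm fun _ => 1) =
      (1 / 2 ^ n : ℝ) *
        ∑ b : Fin n → Bool,
          eval (fun i => if b i then (1 : ℝ) else -1) p *
            ∏ i, (if b i then (1 : ℝ) else -1) := by
  classical
  set ones : (Fin n) →₀ ℕ := Finsupp.equivFunOnFinite.symm fun _ => 1 with hones
  have hones_apply : ∀ i, ones i = 1 := fun i => rfl
  have key : (∑ b : Fin n → Bool,
      eval (fun i => if b i then (1 : ℝ) else -1) p *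
        ∏ i, (if b i then (1 : ℝ) else -1))
      = p.coeff ones * 2 ^ n := by
    have hsum : ∀ b : Fin n → Bool,
        eval (fun i => if b i then (1 : ℝ) else -1) p *
          ∏ i, (if b i then (1 : ℝ) else -1)
        = ∑ d ∈ p.support, p.coeff d *
            ∏ i, (if b i then (1:ℝ) else -1) ^ (d i + 1) := by
      intro b
      rw [eval_eq', Finset.sum_mul]
      refine Finset.sum_congr rfl fun d _ => ?_
      rw [mul_assoc, ← Finset.prod_mul_distrib]
      simp only [← pow_succ]
    rw [Finset.sum_congr rfl (fun b _ => hsum b), Finset.sum_comm]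
    have inner : ∀ d ∈ p.support,
        (∑ b : Fin n → Bool, p.coeff d *
            ∏ i, (if b i then (1:ℝ) else -1) ^ (d i + 1))
        = p.coeff d * (if d = ones then (2:ℝ) ^ n else 0) := by
      intro d hd
      rw [← Finset.mul_sum]
      congr 1
      have hswap : (∑ b : Fin n → Bool, ∏ i, (if b i then (1:ℝ) else -1) ^ (d i + 1))
          = ∏ i, ∑ t : Bool, (if t then (1:ℝ) else -1) ^ (d i + 1) := by
        rw [Finset.prod_univ_sum]
        rw [Fintype.piFinset_univ]
      rw [hswap]
      have hfac : ∀ i : Fin n, (∑ t : Bool, (if t then (1:ℝ) else -1) ^ (d i + 1))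
          = if Odd (d i) then (2:ℝ) else 0 := by
        intro i
        rw [Fintype.sum_bool]
        by_cases h : Odd (d i)
        · rw [if_pos h]
          have he : Even (d i + 1) := Odd.add_one h
          simp [he.neg_one_pow]
          norm_num
        · rw [if_neg h]
          have ho : Odd (d i + 1) := (Nat.not_odd_iff_even.mp h).add_one
          simp [ho.neg_one_pow]
      rw [Finset.prod_congr rfl (fun i _ => hfac i)]
      by_cases hdo : d = ones
      · subst hdo
        simp [hones_apply]
      · rw [if_neg hdo]
        -- d ∈ support, homogeneous ⇒ ∑ d i = n; d ≠ ones ⇒ some d i even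
        have hdeg : ∑ i, d i = n := by
          have h0 : d.degree = n := by
            by_contra h
            exact mem_support_iff.mp hd (hp.coeff_eq_zero h)
          have hds : (∑ i, d i) = d.degree :=
            (Finset.sum_subset (Finset.subset_univ _)
              (fun i _ hi => Finsupp.notMem_support_iff.mp hi)).symm
          rw [hds, h0]
        have : ∃ i, Even (d i) := by
          by_contra h
          push_neg at h
          have hodd : ∀ i, Odd (d i) := fun i => Nat.not_even_iff_odd.mp (h i)
          have hle : ∀ i ∈ Finset.univ, 1 ≤ d i := fun i _ => (hodd i).pos
          have hsum1 : ∑ i : Fin n, (1:ℕ) = ∑ i, d i := by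
            simp [hdeg]
          have := (Finset.sum_eq_sum_iff_of_le hle).mp hsum1
          apply hdo
          ext i
          rw [hones_apply i]
          exact (this i (Finset.mem_univ i)).symm
        obtain ⟨i, hi⟩ := this
        apply Finset.prod_eq_zero (Finset.mem_univ i)
        rw [if_neg (Nat.not_odd_iff_even.mpr hi)]
    rw [Finset.sum_congr rfl inner]
    simp only [mul_ite, mul_zero]
    rw [Finset.sum_ite_eq' p.support ones (fun d => p.coeff d * 2 ^ n)]
    by_cases h : ones ∈ p.support
    · rw [if_pos h]
    · rw [if_neg h]
      have : p.coeff ones = 0 := MvPolynomial.notMem_support_iff.mp h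
      rw [this]
      ring
  rw [key]
  field_simp
end

section
/- Let z₁,...,zₙ be independent complex random variables with E(zᵢ) = 0 and E(zᵢ·conj(zᵢ)) = 1 for each i. Then for any homogeneous polynomial p of degree n in n complex variables, ∂ⁿp/∂x₁···∂xₙ = E(p(z₁,...,zₙ) · ∏ᵢ conj(zᵢ)). -/
open MvPolynomial MeasureTheory ProbabilityTheory

/-- Integral of product of two independent complex random variables. -/
lemma indepFun_integral_mul_complex {Ω : Type*} [MeasurableSpace Ω] {μ : Measure Ω}
    [IsProbabilityMeasure μ] {X Y : Ω → ℂ} (h : IndepFun X Y μ)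
    (hX : Measurable X) (hY : Measurable Y) :
    ∫ ω, X ω * Y ω ∂μ = (∫ ω, X ω ∂μ) * ∫ ω, Y ω ∂μ := by
  rw [indepFun_iff_map_prod_eq_prod_map_map hX.aemeasurable hY.aemeasurable] at h
  haveI : IsProbabilityMeasure (μ.map X) := Measure.isProbabilityMeasure_map hX.aemeasurable
  haveI : IsProbabilityMeasure (μ.map Y) := Measure.isProbabilityMeasure_map hY.aemeasurable
  have h1 : ∫ ω, X ω * Y ω ∂μ
      = ∫ q : ℂ × ℂ, q.1 * q.2 ∂(μ.map fun ω => (X ω, Y ω)) := by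
    rw [integral_map (hX.prodMk hY).aemeasurable]
    exact (measurable_fst.mul measurable_snd).aestronglyMeasurable
  have h2 : ∫ x : ℂ, x ∂(μ.map X) = ∫ ω, X ω ∂μ :=
    integral_map hX.aemeasurable aestronglyMeasurable_id
  have h3 : ∫ y : ℂ, y ∂(μ.map Y) = ∫ ω, Y ω ∂μ :=
    integral_map hY.aemeasurable aestronglyMeasurable_id
  rw [h1, h, integral_prod_mul (fun x : ℂ => x) (fun y : ℂ => y), h2, h3]

lemma aux_prod {ι : Type*} [DecidableEq ι] {Ω : Type*} [MeasurableSpace Ω] {μ : Measure Ω}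
    [IsProbabilityMeasure μ] (g : ι → Ω → ℂ)
    (hindep : iIndepFun g μ)
    (hmeas : ∀ i, Measurable (g i)) (hg : ∀ i, Integrable (g i) μ) (s : Finset ι) :
    Integrable (fun ω => ∏ i ∈ s, g i ω) μ ∧
      ∫ ω, ∏ i ∈ s, g i ω ∂μ = ∏ i ∈ s, ∫ ω, g i ω ∂μ := by
  induction s using Finset.induction_on with
  | empty => simp
  | @insert i s hi IH =>
    have hPeq : (∏ j ∈ s, g j) = fun ω => ∏ j ∈ s, g j ω := by
      funext ω; simp
    have hInd : IndepFun (∏ j ∈ s, g j) (g i) μ :=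
      hindep.indepFun_finset_prod_of_notMem hmeas hi
    have hintP : Integrable ((∏ j ∈ s, g j) * g i) μ :=
      hInd.integrable_mul (by rw [hPeq]; exact IH.1) (hg i)
    have hmeasP : Measurable (∏ j ∈ s, g j) := by
      rw [hPeq]
      exact Finset.measurable_prod (f := g) s (fun j _ => hmeas j)
    have hprodeq : (fun ω => ∏ j ∈ insert i s, g j ω)
        = fun ω => (∏ j ∈ s, g j) ω * g i ω := by
      funext ω
      simp [Finset.prod_insert hi, mul_comm]
    constructor
    · rw [hprodeq]
      exact hintP
    · rw [hprodeq, indepFun_integral_mul_complex hInd hmeasP (hmeas i),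
        Finset.prod_insert hi, ← IH.2, mul_comm]
      congr 1
      rw [hPeq]

theorem stmt3 (n : ℕ) {Ω : Type*} [MeasurableSpace Ω] (μ : Measure Ω)
    [IsProbabilityMeasure μ] (p : MvPolynomial (Fin n) ℂ) (hp : p.IsHomogeneous n)
    (z : Fin n → Ω → ℂ) (hmeas : ∀ i, Measurable (z i))
    (hindep : iIndepFun z μ)
    (hint0 : ∀ i, Integrable (z i) μ)
    (hint : ∀ (i : Fin n) (k : ℕ), k ≤ n →
      Integrable (fun ω => z i ω ^ k * (starRingEnd ℂ) (z i ω)) μ)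
    (hint2 : Integrable (fun ω => eval (fun i => z i ω) p * ∏ i, (starRingEnd ℂ) (z i ω)) μ)
    (hmean : ∀ i, ∫ ω, z i ω ∂μ = 0)
    (hvar : ∀ i, ∫ ω, z i ω * (starRingEnd ℂ) (z i ω) ∂μ = 1) :
    p.coeff (Finsupp.equivFunOnFinite.symm fun _ => 1) =
      ∫ ω, eval (fun i => z i ω) p * ∏ i, (starRingEnd ℂ) (z i ω) ∂μ := by
  classical
  set T : (Fin n) →₀ ℕ := Finsupp.equivFunOnFinite.symm fun _ => 1 with hT
  have hTapp : ∀ i, T i = 1 := fun i => rfl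
  have hconj : Measurable fun w : ℂ => (starRingEnd ℂ) w := Complex.continuous_conj.measurable
  -- for each exponent multi-index d, the family of per-coordinate factors
  set g : ((Fin n) →₀ ℕ) → Fin n → Ω → ℂ :=
    fun d i ω => z i ω ^ d i * (starRingEnd ℂ) (z i ω) with hg
  have hgmeas : ∀ d i, Measurable (g d i) := fun d i =>
    ((hmeas i).pow_const (d i)).mul (hconj.comp (hmeas i))
  have hgindep : ∀ d, iIndepFun (g d) μ := by
    intro d
    exact hindep.comp (fun i w => w ^ d i * (starRingEnd ℂ) w)
      (fun i => (measurable_id.pow_const (d i)).mul hconj)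
  -- degree facts
  have hdeg : ∀ d ∈ p.support, ∑ i, d i = n := by
    intro d hd
    have h1 := hp (mem_support_iff.mp hd)
    have h2 : ∑ i, d i = (Finsupp.weight 1) d := by
      rw [show (1 : Fin n → ℕ) = fun _ => 1 from rfl, ← Finsupp.degree_eq_weight_one]
      rw [Finsupp.degree_apply]
      rw [Finset.sum_subset (Finset.subset_univ d.support)]
      intro i _ hi
      simpa using Finsupp.notMem_support_iff.mp hi
    rw [h2, h1]
  have hgle : ∀ d ∈ p.support, ∀ i, d i ≤ n := by
    intro d hd i
    calc d i ≤ ∑ j, d j :=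
          Finset.single_le_sum (fun j _ => Nat.zero_le _) (Finset.mem_univ i)
      _ = n := hdeg d hd
  have hgint : ∀ d ∈ p.support, ∀ i, Integrable (g d i) μ := fun d hd i =>
    hint i (d i) (hgle d hd i)
  -- rewrite the integrand
  have hkey : (fun ω => eval (fun i => z i ω) p * ∏ i, (starRingEnd ℂ) (z i ω))
      = fun ω => ∑ d ∈ p.support, p.coeff d * ∏ i, g d i ω := by
    funext ω
    rw [eval_eq']
    rw [Finset.sum_mul]
    refine Finset.sum_congr rfl fun d hd => ?_
    rw [mul_assoc, ← Finset.prod_mul_distrib]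
  rw [hkey, integral_finset_sum _ (fun d hd =>
    ((aux_prod (g d) (hgindep d) (hgmeas d) (hgint d hd) Finset.univ).1).const_mul _)]
  have hterm : ∀ d ∈ p.support,
      ∫ ω, p.coeff d * ∏ i, g d i ω ∂μ
        = p.coeff d * ∏ i, ∫ ω, g d i ω ∂μ := by
    intro d hd
    rw [integral_const_mul, (aux_prod (g d) (hgindep d) (hgmeas d) (hgint d hd) Finset.univ).2]
  rw [Finset.sum_congr rfl hterm]
  -- each term with d ≠ T vanishes
  have hzero : ∀ d ∈ p.support, d ≠ T → ∏ i, ∫ ω, g d i ω ∂μ = 0 := by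
    intro d hd hdT
    by_cases hall : ∀ i, 1 ≤ d i
    · exfalso
      apply hdT
      have hsum : ∑ i : Fin n, (1 : ℕ) = ∑ i, d i := by
        rw [hdeg d hd]; simp
      have hall1 := (Finset.sum_eq_sum_iff_of_le (fun i _ => hall i)).mp hsum
      ext i
      rw [hTapp i]
      exact (hall1 i (Finset.mem_univ i)).symm
    · push_neg at hall
      obtain ⟨i, hi⟩ := hall
      have hdi : d i = 0 := Nat.lt_one_iff.mp hi
      apply Finset.prod_eq_zero (Finset.mem_univ i)
      have hgi : g d i = fun ω => (starRingEnd ℂ) (z i ω) := by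
        funext ω; simp [hg, hdi]
      rw [hgi, integral_conj, hmean i, map_zero]
  -- the term at T gives 1
  have hone : ∏ i, ∫ ω, g T i ω ∂μ = 1 := by
    have hgi : ∀ i, g T i = fun ω => z i ω * (starRingEnd ℂ) (z i ω) := by
      intro i; funext ω; simp [hg, hTapp i]
    rw [Finset.prod_congr rfl (fun i _ => by rw [hgi i, hvar i])]
    simp
  rw [Finset.sum_eq_single T]
  · by_cases hT' : T ∈ p.support
    · rw [hone, mul_one]
    · rw [notMem_support_iff.mp hT']
      simp
  · intro d hd hdT
    rw [hzero d hd hdT, mul_zero]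
  · intro hT'
    rw [notMem_support_iff.mp hT']
    simp
end

section
/- Let q(x₁,...,xₙ) be a homogeneous polynomial of degree n with nonnegative coefficients. Then the all-ones vector (1,...,1) lies in the convex hull of supp(q) if and only if inf over all real vectors (y₁,...,yₙ) with y₁+...+yₙ = 0 of log q(e^{y₁},...,e^{yₙ}) is greater than −∞. -/
open MvPolynomial

private lemma prod_exp_pow (n : ℕ) (d : Fin n →₀ ℕ) (Y : Fin n → ℝ) :
    ∏ i, Real.exp (Y i) ^ (d i) = Real.exp (∑ i, (d i : ℝ) * Y i) := by
  rw [Real.exp_sum]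
  exact Finset.prod_congr rfl fun i _ => by rw [← Real.exp_nat_mul]

private lemma clm_eq_sum (n : ℕ) (x : Fin n → ℝ) (f : (Fin n → ℝ) →L[ℝ] ℝ) :
    f x = ∑ i, x i * f (Pi.single i 1) :=
  calc f x = f (∑ i, Pi.single i (x i)) := by rw [Finset.univ_sum_single]
  _ = ∑ i, f (Pi.single i (x i)) := map_sum f _ _
  _ = ∑ i, x i * f (Pi.single i 1) := Finset.sum_congr rfl fun i _ => by
      rw [← smul_eq_mul, ← map_smul, ← Pi.single_smul, smul_eq_mul, mul_one]

theorem stmt7 (n : ℕ) (q : MvPolynomial (Fin n) ℝ) (hq : q.IsHomogeneous n)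
    (hcoeff : ∀ m, 0 ≤ q.coeff m) (hq0 : q ≠ 0) :
    ((fun _ => (1 : ℝ)) ∈
        convexHull ℝ ((fun (r : Fin n →₀ ℕ) (i : Fin n) => (r i : ℝ)) '' ↑q.support)) ↔
      ∃ L : ℝ, ∀ y : Fin n → ℝ, ∑ i, y i = 0 →
        L ≤ Real.log (eval (fun i => Real.exp (y i)) q) := by
  have hpos : ∀ d ∈ q.support, (0:ℝ) < q.coeff d := fun d hd =>
    lt_of_le_of_ne (hcoeff d) (Ne.symm (mem_support_iff.mp hd))
  have hdeg : ∀ d ∈ q.support, ∑ i, d i = n := by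
    intro d hd
    have h := hq (mem_support_iff.mp hd)
    rw [Finsupp.weight_apply, Finsupp.sum_fintype] at h
    · simpa using h
    · simp
  have hne : q.support.Nonempty := MvPolynomial.support_nonempty.mpr hq0
  have hevalpos : ∀ Y : Fin n → ℝ,
      0 < eval (fun i => Real.exp (Y i)) q := by
    intro Y
    rw [eval_eq']
    exact Finset.sum_pos (fun d hd => mul_pos (hpos d hd)
      (Finset.prod_pos fun i _ => pow_pos (Real.exp_pos _) _)) hne
  have hterm_le : ∀ (Y : Fin n → ℝ) (d : Fin n →₀ ℕ), d ∈ q.support →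
      q.coeff d * Real.exp (∑ i, (d i : ℝ) * Y i) ≤ eval (fun i => Real.exp (Y i)) q := by
    intro Y d hd
    rw [eval_eq', ← prod_exp_pow]
    exact Finset.single_le_sum (f := fun d => q.coeff d * ∏ i, Real.exp (Y i) ^ d i)
      (fun e he => mul_nonneg (hcoeff e)
        (Finset.prod_nonneg fun i _ => pow_nonneg (Real.exp_pos _).le _)) hd
  constructor
  · rw [mem_convexHull_iff_exists_fintype]
    rintro ⟨ι, _, w, z, hw0, hw1, hz, hsum⟩
    choose r hr hzr using hz
    refine ⟨∑ j, w j * Real.log (q.coeff (r j)), fun y hy => ?_⟩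
    have hzero : ∑ j, w j * (∑ i, ((r j) i : ℝ) * y i) = 0 := by
      have : ∀ j, ∀ i, ((r j) i : ℝ) = z j i := by
        intro j i; rw [← hzr j]
      calc ∑ j, w j * (∑ i, ((r j) i : ℝ) * y i)
          = ∑ i, (∑ j, w j * z j i) * y i := by
            simp_rw [this, Finset.mul_sum, Finset.sum_mul]
            rw [Finset.sum_comm]
            exact Finset.sum_congr rfl fun i _ => Finset.sum_congr rfl fun j _ => by ring
        _ = ∑ i, y i := by
            refine Finset.sum_congr rfl fun i _ => ?_
            have := congrFun hsum i
            simp only [Finset.sum_apply, Pi.smul_apply, smul_eq_mul] at this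
            rw [this, one_mul]
        _ = 0 := hy
    have key : ∀ j, Real.log (q.coeff (r j)) + ∑ i, ((r j) i : ℝ) * y i ≤
        Real.log (eval (fun i => Real.exp (y i)) q) := by
      intro j
      have h1 := hterm_le y (r j) (hr j)
      have h2 : (0:ℝ) < q.coeff (r j) * Real.exp (∑ i, ((r j) i : ℝ) * y i) :=
        mul_pos (hpos _ (hr j)) (Real.exp_pos _)
      have := Real.log_le_log h2 h1
      rwa [Real.log_mul (hpos _ (hr j)).ne' (Real.exp_pos _).ne', Real.log_exp] at this
    calc ∑ j, w j * Real.log (q.coeff (r j))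
        = ∑ j, w j * (Real.log (q.coeff (r j)) + ∑ i, ((r j) i : ℝ) * y i) := by
          simp_rw [mul_add]
          rw [Finset.sum_add_distrib, hzero, add_zero]
      _ ≤ ∑ j, w j * Real.log (eval (fun i => Real.exp (y i)) q) :=
          Finset.sum_le_sum fun j _ => mul_le_mul_of_nonneg_left (key j) (hw0 j)
      _ = Real.log (eval (fun i => Real.exp (y i)) q) := by
          rw [← Finset.sum_mul, hw1, one_mul]
  · rintro ⟨L, hL⟩
    by_contra hmem
    rcases Nat.eq_zero_or_pos n with hn | hn
    · subst hn
      obtain ⟨d, hd⟩ := hne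
      exact hmem (subset_convexHull ℝ _ ⟨d, hd, funext fun i => i.elim0⟩)
    have hSfin : ((fun (r : Fin n →₀ ℕ) (i : Fin n) => (r i : ℝ)) '' ↑q.support).Finite :=
      (q.support.finite_toSet.image _)
    obtain ⟨f, u, hfu, hfx⟩ := geometric_hahn_banach_closed_point
      (convex_convexHull ℝ _) (hSfin.isCompact_convexHull (𝕜 := ℝ)).isClosed hmem
    set a : Fin n → ℝ := fun i => f (Pi.single i 1) with ha
    set s : ℝ := ∑ i, a i with hs
    have hus : u < s := by
      have := hfx
      rwa [clm_eq_sum, (by simp only [one_mul]; rfl : ∑ i, (1:ℝ) * f (Pi.single i 1) = s)] at this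
    set y : Fin n → ℝ := fun i => a i - s / n with hy
    have hysum : ∑ i, y i = 0 := by
      simp only [hy, Finset.sum_sub_distrib, ← hs, Finset.sum_const, Finset.card_univ,
        Fintype.card_fin, nsmul_eq_mul]
      field_simp
      ring
    have hdy : ∀ d ∈ q.support, ∑ i, (d i : ℝ) * y i < u - s := by
      intro d hd
      have hflt : f (fun i => (d i : ℝ)) < u :=
        hfu _ (subset_convexHull ℝ _ ⟨d, hd, rfl⟩)
      rw [clm_eq_sum] at hflt
      have hsum_d : ∑ i, (d i : ℝ) = (n : ℝ) := by
        rw [← Nat.cast_sum]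
        exact_mod_cast congrArg Nat.cast (hdeg d hd)
      calc ∑ i, (d i : ℝ) * y i
          = (∑ i, (d i : ℝ) * a i) - (s / n) * ∑ i, (d i : ℝ) := by
            simp_rw [hy, mul_sub, Finset.sum_sub_distrib, Finset.mul_sum]
            congr 1
            exact Finset.sum_congr rfl fun i _ => by ring
        _ = (∑ i, (d i : ℝ) * a i) - s := by
            rw [hsum_d]
            field_simp
        _ < u - s := by
            have : (∑ i, (d i : ℝ) * a i) < u := hflt
            linarith
    set ε : ℝ := s - u with hε
    have hεpos : 0 < ε := by simp [hε]; linarith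
    set C : ℝ := ∑ d ∈ q.support, q.coeff d with hC
    have hCpos : 0 < C := Finset.sum_pos hpos hne
    set t : ℝ := max 1 ((Real.log C - L + 1) / ε) with ht
    have ht1 : (1:ℝ) ≤ t := le_max_left _ _
    have htpos : 0 < t := lt_of_lt_of_le one_pos ht1
    have htε : Real.log C - L + 1 ≤ t * ε := by
      rw [← div_le_iff₀ hεpos]
      exact le_max_right _ _
    have heval_le : eval (fun i => Real.exp (t * y i)) q ≤ C * Real.exp (-(t * ε)) := by
      rw [eval_eq', hC, Finset.sum_mul]
      refine Finset.sum_le_sum fun d hd => ?_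
      have : ∏ i, Real.exp (t * y i) ^ d i = Real.exp (∑ i, (d i : ℝ) * (t * y i)) :=
        prod_exp_pow n d _
      rw [this]
      refine mul_le_mul_of_nonneg_left ?_ (hcoeff d)
      rw [Real.exp_le_exp]
      have : ∑ i, (d i : ℝ) * (t * y i) = t * ∑ i, (d i : ℝ) * y i := by
        rw [Finset.mul_sum]; exact Finset.sum_congr rfl fun i _ => by ring
      rw [this]
      have := hdy d hd
      nlinarith [hdy d hd]
    have hlog := Real.log_le_log (hevalpos fun i => t * y i) heval_le
    rw [Real.log_mul hCpos.ne' (Real.exp_pos _).ne', Real.log_exp] at hlog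
    have hL' := hL (fun i => t * y i) (by rw [← Finset.mul_sum, hysum, mul_zero])
    linarith
end

section
/- Let q be a homogeneous polynomial of degree n in n variables with nonnegative coefficients such that (1,...,1) ∈ CO(supp(q)). Then q(x₁,...,xₙ) ≥ Cap(q) · ∏ᵢ xᵢ for all positive vectors x, where Cap(q) = inf{q(α) : αᵢ > 0, ∏ αᵢ = 1} > 0. -/
open MvPolynomial

theorem scale_lemma (n : ℕ) (q : MvPolynomial (Fin n) ℝ) (hq : q.IsHomogeneous n)
    (c : ℝ) (α : Fin n → ℝ) :
    eval (fun i => c * α i) q = c ^ n * eval α q := by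
  rw [eval_eq', eval_eq', Finset.mul_sum]
  refine Finset.sum_congr rfl fun d hd => ?_
  have hdeg : ∑ i, d i = n := by
    have h := hq (mem_support_iff.mp hd)
    have : (Finsupp.weight 1) d = ∑ i, d i := by
      simp [Finsupp.weight_apply, Finsupp.sum_fintype]
    omega
  rw [show (∏ i, (c * α i) ^ d i) = (∏ i, c ^ d i) * ∏ i, α i ^ d i by
    rw [← Finset.prod_mul_distrib]; exact Finset.prod_congr rfl fun i _ => mul_pow _ _ _,
    Finset.prod_pow_eq_pow_sum, hdeg]
  ring

theorem stmt8 (n : ℕ) (q : MvPolynomial (Fin n) ℝ) (hq : q.IsHomogeneous n)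
    (hcoeff : ∀ m, 0 ≤ q.coeff m)
    (hone : (fun _ => (1 : ℝ)) ∈
      convexHull ℝ ((fun (r : Fin n →₀ ℕ) (i : Fin n) => (r i : ℝ)) '' ↑q.support)) :
    0 < sInf {t : ℝ | ∃ α : Fin n → ℝ, (∀ i, 0 < α i) ∧ ∏ i, α i = 1 ∧ t = eval α q} ∧
    ∀ x : Fin n → ℝ, (∀ i, 0 < x i) →
      sInf {t : ℝ | ∃ α : Fin n → ℝ, (∀ i, 0 < α i) ∧ ∏ i, α i = 1 ∧ t = eval α q} *
          ∏ i, x i ≤ eval x q := by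
  classical
  set S := {t : ℝ | ∃ α : Fin n → ℝ, (∀ i, 0 < α i) ∧ ∏ i, α i = 1 ∧ t = eval α q} with hS
  set f : (Fin n →₀ ℕ) → (Fin n → ℝ) := fun r i => (r i : ℝ) with hf
  -- support nonempty
  have hsupp : q.support.Nonempty := by
    by_contra h
    rw [Finset.not_nonempty_iff_eq_empty] at h
    rw [h] at hone
    simp at hone
  -- min coefficient
  set c0 : ℝ := q.support.inf' hsupp (fun m => q.coeff m) with hc0
  have hc0pos : 0 < c0 := by
    rw [hc0, Finset.lt_inf'_iff]
    intro m hm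
    exact lt_of_le_of_ne (hcoeff m) (Ne.symm (mem_support_iff.mp hm))
  -- weights from convex hull
  rw [← Finset.coe_image, Finset.mem_convexHull] at hone
  obtain ⟨w, hw0, hw1, hwc⟩ := hone
  set T := q.support.image f with hT
  rw [Finset.centerMass_eq_of_sum_1 _ _ hw1] at hwc
  have hcoord : ∀ i, ∑ y ∈ T, w y * y i = 1 := by
    intro i
    have := congrFun hwc i
    rw [← this]
    simp [Finset.sum_apply]
  -- key bound
  have key : ∀ α : Fin n → ℝ, (∀ i, 0 < α i) → ∏ i, α i = 1 → c0 ≤ eval α q := by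
    intro α hα hprod
    set g : (Fin n → ℝ) → ℝ := fun y => ∏ i, (α i) ^ (y i) with hg
    have hgpos : ∀ y, 0 < g y := fun y =>
      Finset.prod_pos fun i _ => Real.rpow_pos_of_pos (hα i) _
    -- each g y ≤ eval α q / c0
    have hge : ∀ y ∈ T, c0 * g y ≤ eval α q := by
      intro y hy
      obtain ⟨m, hm, hmy⟩ := Finset.mem_image.mp hy
      have hgy : g y = ∏ i, α i ^ m i := by
        rw [hg, ← hmy]
        exact Finset.prod_congr rfl fun i _ => by
          simp [hf, Real.rpow_natCast]
      rw [eval_eq']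
      calc c0 * g y ≤ q.coeff m * ∏ i, α i ^ m i := by
            rw [hgy]
            exact mul_le_mul_of_nonneg_right (Finset.inf'_le _ hm)
              (Finset.prod_nonneg fun i _ => pow_nonneg (hα i).le _)
        _ ≤ ∑ d ∈ q.support, q.coeff d * ∏ i, α i ^ d i :=
            Finset.single_le_sum (f := fun d => q.coeff d * ∏ i, α i ^ d i)
              (fun d _ => mul_nonneg (hcoeff d)
                (Finset.prod_nonneg fun i _ => pow_nonneg (hα i).le _)) hm
    -- AM-GM
    have amgm : (1 : ℝ) ≤ ∑ y ∈ T, w y * g y := by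
      have h1 : ∏ y ∈ T, g y ^ w y = 1 := by
        have step : ∀ y ∈ T, g y ^ w y = ∏ i, α i ^ (w y * y i) := by
          intro y _
          rw [hg, ← Real.finset_prod_rpow _ _ (fun i _ => Real.rpow_nonneg (hα i).le _) _]
          exact Finset.prod_congr rfl fun i _ => by
            rw [← Real.rpow_mul (hα i).le, mul_comm]
        rw [Finset.prod_congr rfl step, Finset.prod_comm]
        have step2 : ∀ i ∈ (Finset.univ : Finset (Fin n)),
            (∏ y ∈ T, α i ^ (w y * y i)) = α i ^ (∑ y ∈ T, w y * y i) :=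
          fun i _ => (Real.rpow_sum_of_pos (hα i) _ _).symm
        rw [Finset.prod_congr rfl step2]
        calc ∏ i, α i ^ (∑ y ∈ T, w y * y i) = ∏ i, α i := by
              refine Finset.prod_congr rfl fun i _ => ?_
              rw [hcoord i, Real.rpow_one]
          _ = 1 := hprod
      calc (1:ℝ) = ∏ y ∈ T, g y ^ w y := h1.symm
        _ ≤ ∑ y ∈ T, w y * g y :=
            Real.geom_mean_le_arith_mean_weighted T w g hw0 hw1 fun y _ => (hgpos y).le
    have : ∑ y ∈ T, w y * g y ≤ (eval α q) / c0 := by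
      calc ∑ y ∈ T, w y * g y ≤ ∑ y ∈ T, w y * (eval α q / c0) := by
            refine Finset.sum_le_sum fun y hy => ?_
            rcases eq_or_lt_of_le (hw0 y hy) with h | h
            · rw [← h]; simp
            · exact mul_le_mul_of_nonneg_left
                ((le_div_iff₀ hc0pos).mpr (by linarith [hge y hy, mul_comm c0 (g y)])) (hw0 y hy)
        _ = eval α q / c0 := by rw [← Finset.sum_mul, hw1, one_mul]
    have h2 : (1:ℝ) ≤ eval α q / c0 := le_trans amgm this
    calc c0 = c0 * 1 := (mul_one c0).symm
      _ ≤ c0 * (eval α q / c0) := mul_le_mul_of_nonneg_left h2 hc0pos.le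
      _ = eval α q := by field_simp
  -- S is nonempty and bounded below
  have hmem1 : eval (fun _ => (1:ℝ)) q ∈ S := ⟨fun _ => 1, fun _ => one_pos, by simp, rfl⟩
  have hSne : S.Nonempty := ⟨_, hmem1⟩
  have hbdd : BddBelow S := ⟨c0, fun t ⟨α, hα, hp, ht⟩ => ht ▸ key α hα hp⟩
  have hinf : c0 ≤ sInf S := le_csInf hSne fun t ⟨α, hα, hp, ht⟩ => ht ▸ key α hα hp
  refine ⟨lt_of_lt_of_le hc0pos hinf, ?_⟩
  intro x hx
  set P : ℝ := ∏ i, x i with hP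
  have hPpos : 0 < P := Finset.prod_pos fun i _ => hx i
  set c : ℝ := P ^ ((n:ℝ)⁻¹) with hc
  have hcpos : 0 < c := Real.rpow_pos_of_pos hPpos _
  set α : Fin n → ℝ := fun i => x i / c with hα
  have hαpos : ∀ i, 0 < α i := fun i => div_pos (hx i) hcpos
  have hcn : c ^ n = P := by
    rcases Nat.eq_zero_or_pos n with h | h
    · subst h; simp [hP]
    · rw [hc, ← Real.rpow_natCast (P ^ ((n:ℝ)⁻¹)) n, ← Real.rpow_mul hPpos.le,
        inv_mul_cancel₀ (by exact_mod_cast h.ne'), Real.rpow_one]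
  have hαprod : ∏ i, α i = 1 := by
    rw [hα]
    simp only []
    rw [Finset.prod_div_distrib, Finset.prod_const, ← hP]
    rw [Finset.card_univ, Fintype.card_fin, hcn]
    exact div_self hPpos.ne'
  have hxeq : eval x q = P * eval α q := by
    have : x = fun i => c * α i := by
      funext i; rw [hα]; field_simp
    rw [this, scale_lemma n q hq c α, hcn]
  have hmemα : eval α q ∈ S := ⟨α, hαpos, hαprod, rfl⟩
  have := csInf_le hbdd hmemα
  rw [hxeq]
  calc sInf S * P ≤ eval α q * P := mul_le_mul_of_nonneg_right this hPpos.le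
    _ = P * eval α q := mul_comm _ _
end

section
/- Let R be a homogeneous polynomial in n complex variables with real coefficients such that for every real vector x with positive coordinates, R is hyperbolic in direction x (i.e., for all real y, all roots t of R(y − t·x) = 0 are real), and R(x) > 0 for positive vectors x. Then R has the half-plane property: R(z₁,...,zₙ) ≠ 0 whenever Re(zᵢ) > 0 for all i. Moreover |R(x₁+iy₁,...,xₙ+iyₙ)| ≥ R(x₁,...,xₙ) for all real x with positive coordinates and all real y. -/
open MvPolynomial Polynomial

lemma aux_smul_eval {n d : ℕ} {R : MvPolynomial (Fin n) ℂ} (hR : R.IsHomogeneous d)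
    (c : ℂ) (z : Fin n → ℂ) :
    MvPolynomial.eval (fun i => c * z i) R = c ^ d * MvPolynomial.eval z R := by
  rw [eval_eq, eval_eq, Finset.mul_sum]
  refine Finset.sum_congr rfl fun m hm => ?_
  have hd : ∑ i ∈ m.support, m i = d := by
    have h := hR (MvPolynomial.mem_support_iff.mp hm)
    rw [← h]
    simp [Finsupp.weight_apply, Finsupp.sum, Finsupp.degree]
  calc R.coeff m * ∏ i ∈ m.support, (c * z i) ^ m i
      = R.coeff m * ((∏ i ∈ m.support, c ^ m i) * ∏ i ∈ m.support, z i ^ m i) := by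
        rw [← Finset.prod_mul_distrib]; simp [mul_pow]
    _ = c ^ d * (R.coeff m * ∏ i ∈ m.support, z i ^ m i) := by
        rw [Finset.prod_pow_eq_pow_sum, hd]; ring

theorem stmt11 (n d : ℕ) (R : MvPolynomial (Fin n) ℂ) (hR : R.IsHomogeneous d)
    (hreal : ∀ m, (R.coeff m).im = 0)
    (hhyp : ∀ x : Fin n → ℝ, (∀ i, 0 < x i) → ∀ y : Fin n → ℝ, ∀ t : ℂ,
      eval (fun i => (y i : ℂ) - t * (x i : ℂ)) R = 0 → t.im = 0)
    (hpos : ∀ x : Fin n → ℝ, (∀ i, 0 < x i) → 0 < (eval (fun i => (x i : ℂ)) R).re) :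
    (∀ z : Fin n → ℂ, (∀ i, 0 < (z i).re) → eval z R ≠ 0) ∧
    (∀ x y : Fin n → ℝ, (∀ i, 0 < x i) →
      (eval (fun i => (x i : ℂ)) R).re ≤
        ‖eval (fun i => (x i : ℂ) + (y i : ℂ) * Complex.I) R‖) := by
  constructor
  · intro z hz h0
    set x : Fin n → ℝ := fun i => (z i).re with hxdef
    set y : Fin n → ℝ := fun i => (z i).im with hydef
    have hx : ∀ i, 0 < x i := hz
    have hkey : MvPolynomial.eval (fun i => (y i : ℂ) - Complex.I * (x i : ℂ)) R = 0 := by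
      have hfun : (fun i => (y i : ℂ) - Complex.I * (x i : ℂ)) =
          fun i => (-Complex.I) * z i := by
        funext i
        apply Complex.ext <;> simp [hxdef, hydef]
      rw [hfun, aux_smul_eval hR, h0, mul_zero]
    have := hhyp x hx y Complex.I hkey
    simp [Complex.I_im] at this
  · intro x y hx
    have hRx : MvPolynomial.eval (fun i => (x i : ℂ)) R ≠ 0 := by
      intro h
      have := hpos x hx
      rw [h] at this
      simp at this
    set p : Polynomial ℂ := MvPolynomial.eval₂ (Polynomial.C : ℂ →+* Polynomial ℂ)
      (fun i => Polynomial.C (x i : ℂ) + Polynomial.C (y i : ℂ) * Polynomial.X) R with hpdef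
    have hpe : ∀ t : ℂ, p.eval t =
        MvPolynomial.eval (fun i => (x i : ℂ) + (y i : ℂ) * t) R := by
      intro t
      have h := MvPolynomial.eval₂_comp_left (Polynomial.evalRingHom t)
        (Polynomial.C : ℂ →+* Polynomial ℂ)
        (fun i => Polynomial.C (x i : ℂ) + Polynomial.C (y i : ℂ) * Polynomial.X) R
      simp only [Polynomial.coe_evalRingHom] at h
      rw [hpdef]
      have hc : (Polynomial.evalRingHom t).comp (Polynomial.C : ℂ →+* Polynomial ℂ) =
          RingHom.id ℂ := by ext a; simp
      have hg : (Polynomial.eval t ∘ fun i =>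
            Polynomial.C ((x i : ℝ) : ℂ) + Polynomial.C ((y i : ℝ) : ℂ) * Polynomial.X) =
          fun i => ((x i : ℝ) : ℂ) + ((y i : ℝ) : ℂ) * t := by
        funext i; simp
      rw [h, hc, hg]
      rfl
    have hp0 : p.eval 0 = MvPolynomial.eval (fun i => (x i : ℂ)) R := by
      rw [hpe 0]; simp
    have hpne : p ≠ 0 := by
      intro h
      apply hRx
      rw [← hp0, h, Polynomial.eval_zero]
    have hroots : ∀ l ∈ p.roots, ‖0 - l‖ ≤ ‖Complex.I - l‖ := by
      intro l hl
      have hlr : MvPolynomial.eval (fun i => (x i : ℂ) + (y i : ℂ) * l) R = 0 := by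
        rw [← hpe l]; exact (Polynomial.mem_roots'.mp hl).2
      have hl0 : l ≠ 0 := by
        intro h
        apply hRx
        rw [← hlr, h]
        simp
      have him : l.im = 0 := by
        have hfun : (fun i => (x i : ℂ) + (y i : ℂ) * l) =
            fun i => l * ((y i : ℂ) - (-(l⁻¹)) * (x i : ℂ)) := by
          funext i
          field_simp
          ring
        rw [hfun, aux_smul_eval hR] at hlr
        have hld : (l : ℂ) ^ d ≠ 0 := pow_ne_zero d hl0
        have h2 : MvPolynomial.eval (fun i => ((y i : ℝ) : ℂ) - (-(l⁻¹)) * ((x i : ℝ) : ℂ)) R = 0 := by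
          rcases mul_eq_zero.mp hlr with h | h
          · exact absurd h hld
          · exact h
        have h3 := hhyp x hx y (-(l⁻¹)) h2
        have h4 : (l⁻¹).im = 0 := by
          have := Complex.neg_im (l⁻¹)
          rw [h3] at this
          linarith [this]
        have h5 := Complex.inv_im (l⁻¹)
        rw [inv_inv, h4] at h5
        simpa using h5
      rw [Complex.norm_def, Complex.norm_def]
      apply Real.sqrt_le_sqrt
      simp only [Complex.normSq_apply, Complex.sub_re, Complex.sub_im, Complex.zero_re,
        Complex.zero_im, Complex.I_re, Complex.I_im, him]
      nlinarith
    have hfac := Polynomial.Splits.eq_prod_roots (IsAlgClosed.splits p)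
    have habs : ∀ t : ℂ, ‖p.eval t‖ =
        ‖p.leadingCoeff‖ * ((p.roots.map (fun a => ‖t - a‖)).prod) := by
      intro t
      conv_lhs => rw [hfac]
      rw [Polynomial.eval_mul, Polynomial.eval_C, norm_mul, Polynomial.eval_multiset_prod,
        Multiset.map_map]
      rw [show ∀ s : Multiset ℂ, ‖s.prod‖ = (s.map (‖·‖)).prod from
        fun s => map_multiset_prod (normHom : ℂ →*₀ ℝ) s, Multiset.map_map]
      simp [Function.comp_def]
    have hprodle : ((p.roots.map (fun a => ‖0 - a‖)).prod) ≤
        ((p.roots.map (fun a => ‖Complex.I - a‖)).prod) := by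
      have key : ∀ s : Multiset ℂ, (∀ l ∈ s, ‖0 - l‖ ≤ ‖Complex.I - l‖) →
          ((s.map (fun a => ‖0 - a‖)).prod) ≤
          ((s.map (fun a => ‖Complex.I - a‖)).prod) := by
        intro s
        induction s using Multiset.induction with
        | empty => intro _; simp
        | cons a s ih =>
          intro h
          simp only [Multiset.map_cons, Multiset.prod_cons]
          have h1 : 0 ≤ (s.map (fun a => ‖0 - a‖)).prod :=
            Multiset.prod_nonneg (by
              intro b hb
              obtain ⟨c, _, rfl⟩ := Multiset.mem_map.mp hb
              exact norm_nonneg _)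
          exact mul_le_mul (h a (Multiset.mem_cons_self a s))
            (ih fun l hl => h l (Multiset.mem_cons_of_mem hl)) h1 (norm_nonneg _)
      exact key p.roots hroots
    calc (MvPolynomial.eval (fun i => (x i : ℂ)) R).re
        ≤ ‖MvPolynomial.eval (fun i => (x i : ℂ)) R‖ := Complex.re_le_norm _
      _ = ‖p.eval 0‖ := by rw [hp0]
      _ = ‖p.leadingCoeff‖ * ((p.roots.map (fun a => ‖0 - a‖)).prod) :=
          habs 0
      _ ≤ ‖p.leadingCoeff‖ * ((p.roots.map (fun a => ‖Complex.I - a‖)).prod) :=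
          mul_le_mul_of_nonneg_left hprodle (norm_nonneg _)
      _ = ‖p.eval Complex.I‖ := (habs Complex.I).symm
      _ = ‖MvPolynomial.eval (fun i => (x i : ℂ) + (y i : ℂ) * Complex.I) R‖ := by
          rw [hpe]
end

section
/- Let R be a homogeneous polynomial of degree n in n complex variables with the half-plane property (R(z) ≠ 0 whenever all Re(zᵢ) > 0). Then for every real vector X ∈ ℝⁿ, all roots of the univariate equation R(X − t·e) = 0 are real, where e = (1,...,1); moreover, if X has positive coordinates, all these roots are positive. -/
open MvPolynomial

lemma eval_mul_homog {σ : Type*} {φ : MvPolynomial σ ℂ} {n : ℕ}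
    (h : φ.IsHomogeneous n) (c : ℂ) (z : σ → ℂ) :
    eval (fun i => c * z i) φ = c ^ n * eval z φ := by
  rw [eval_eq, eval_eq, Finset.mul_sum]
  apply Finset.sum_congr rfl
  intro d hd
  have hdeg : d.degree = n := by
    by_contra hne
    exact (MvPolynomial.mem_support_iff.mp hd) (h.coeff_eq_zero hne)
  have : ∏ i ∈ d.support, (c * z i) ^ d i = c ^ n * ∏ i ∈ d.support, z i ^ d i := by
    simp_rw [mul_pow]
    rw [Finset.prod_mul_distrib, Finset.prod_pow_eq_pow_sum]
    rw [← hdeg, Finsupp.degree]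
    rfl
  rw [this]; ring

theorem stmt12 (n : ℕ) (R : MvPolynomial (Fin n) ℂ) (hR : R.IsHomogeneous n) (hR0 : R ≠ 0)
    (hhp : ∀ z : Fin n → ℂ, (∀ i, 0 < (z i).re) → eval z R ≠ 0) :
    (∀ X : Fin n → ℝ, ∀ t : ℂ, eval (fun i => (X i : ℂ) - t) R = 0 → t.im = 0) ∧
    (∀ X : Fin n → ℝ, (∀ i, 0 < X i) → ∀ t : ℂ,
      eval (fun i => (X i : ℂ) - t) R = 0 → t.im = 0 ∧ 0 < t.re) := by
  have key : ∀ X : Fin n → ℝ, ∀ t : ℂ, eval (fun i => (X i : ℂ) - t) R = 0 → t.im = 0 := by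
    intro X t h0
    by_contra hy
    set c : ℂ := Complex.I / (t.im : ℂ) with hc
    have heval : eval (fun i => c * ((X i : ℂ) - t)) R = 0 := by
      rw [eval_mul_homog hR, h0, mul_zero]
    refine hhp _ ?_ heval
    intro i
    have hy' : ((t.im : ℝ) : ℂ) ≠ 0 := by exact_mod_cast hy
    have : (c * ((X i : ℂ) - t)).re = 1 := by
      rw [hc]
      simp [Complex.mul_re, Complex.div_ofReal_re, Complex.div_ofReal_im]
      field_simp
    rw [this]; norm_num
  refine ⟨key, fun X hX t h0 => ⟨key X t h0, ?_⟩⟩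
  by_contra hre
  push_neg at hre
  refine hhp _ ?_ h0
  intro i
  have := hX i
  simp only [Complex.sub_re, Complex.ofReal_re]
  linarith
end

section
/- Let A, B, C be n×n positive semidefinite matrices (real symmetric or Hermitian) with B − A positive semidefinite, rank(B) ≥ n−1, rank(A) ≥ l, rank(C) ≥ 1, rank(A+C) ≥ l+1, and rank(B+C) = n, where 0 ≤ l ≤ n−1. Then there exist n linearly independent vectors v₁,...,vₙ with v₁,...,v_l ∈ Im(A), v_{l+1},...,v_{n−1} ∈ Im(B), and vₙ ∈ Im(C). -/
open scoped ComplexOrder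
open Matrix Submodule Module

section helpers
open Matrix Submodule

lemma herm_dot_zero {n : ℕ} {M : Matrix (Fin n) (Fin n) ℂ} (hM : M.IsHermitian)
    {k : Fin n → ℂ} (hk : M *ᵥ k = 0) (z : Fin n → ℂ) :
    star k ⬝ᵥ M *ᵥ z = 0 := by
  rw [dotProduct_mulVec]
  have : star k ᵥ* M = 0 := by
    have h := star_mulVec (M := Mᴴ) (v := k)
    rw [conjTranspose_conjTranspose, hM.eq, hk] at h
    simpa using h.symm
  rw [this, zero_dotProduct]

lemma psd_range_sup_ker {n : ℕ} {B : Matrix (Fin n) (Fin n) ℂ} (hB : B.PosSemidef) :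
    LinearMap.range B.mulVecLin ⊔ LinearMap.ker B.mulVecLin = ⊤ := by
  have hdisj : Disjoint (LinearMap.range B.mulVecLin) (LinearMap.ker B.mulVecLin) := by
    rw [disjoint_def]
    rintro x ⟨z, rfl⟩ hker
    rw [LinearMap.mem_ker, mulVecLin_apply] at hker
    rw [mulVecLin_apply] at hker
    have h1 : star (B *ᵥ z) ⬝ᵥ (B *ᵥ z) = 0 := herm_dot_zero hB.1 hker z
    rw [dotProduct_star_self_eq_zero] at h1
    simpa using h1
  have hfr : Module.finrank ℂ (LinearMap.range B.mulVecLin) +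
      Module.finrank ℂ (LinearMap.ker B.mulVecLin) = n := by
    rw [LinearMap.finrank_range_add_finrank_ker]
    simp
  apply Submodule.eq_top_of_finrank_eq
  rw [← Submodule.finrank_sup_add_finrank_inf_eq] at hfr
  rw [hdisj.eq_bot] at hfr
  simp only [finrank_bot, add_zero] at hfr
  rw [hfr]; simp

lemma psd_range_le {n : ℕ} {A B : Matrix (Fin n) (Fin n) ℂ}
    (hA : A.PosSemidef) (hB : B.PosSemidef) (hBA : (B - A).PosSemidef) :
    LinearMap.range A.mulVecLin ≤ LinearMap.range B.mulVecLin := by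
  rintro _ ⟨x, rfl⟩
  have hx : A.mulVecLin x ∈ LinearMap.range B.mulVecLin ⊔ LinearMap.ker B.mulVecLin := by
    rw [psd_range_sup_ker hB]; trivial
  obtain ⟨r, hr, k, hk, hrk⟩ := Submodule.mem_sup.mp hx
  rw [LinearMap.mem_ker, mulVecLin_apply] at hk
  -- show k = 0
  have hBk : star k ⬝ᵥ B *ᵥ k = 0 := herm_dot_zero hB.1 hk k
  have hAk0 : star k ⬝ᵥ A *ᵥ k = 0 := by
    have h1 := hBA.dotProduct_mulVec_nonneg k
    have h2 := hA.dotProduct_mulVec_nonneg k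
    rw [sub_mulVec, dotProduct_sub, hBk] at h1
    have h1' : star k ⬝ᵥ A *ᵥ k ≤ 0 := by simpa using h1
    exact le_antisymm h1' h2
  have hAk : A *ᵥ k = 0 := (hA.dotProduct_mulVec_zero_iff k).mp hAk0
  have hkr : star k ⬝ᵥ r = 0 := by
    obtain ⟨z, rfl⟩ := hr
    rw [mulVecLin_apply]
    exact herm_dot_zero hB.1 hk z
  have hkk : star k ⬝ᵥ k = 0 := by
    have h3 : star k ⬝ᵥ A *ᵥ x = 0 := herm_dot_zero hA.1 hAk x
    rw [← mulVecLin_apply, ← hrk, dotProduct_add, hkr] at h3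
    simpa using h3
  rw [dotProduct_star_self_eq_zero] at hkk
  rw [← hrk, hkk, add_zero]
  exact hr
open Matrix Submodule Module

variable {E : Type*} [AddCommGroup E] [Module ℂ E] [FiniteDimensional ℂ E]

lemma sub_li (P : Submodule ℂ E) (l : ℕ) (hP : l ≤ finrank ℂ P) :
    ∃ f : Fin l → E, LinearIndependent ℂ f ∧ ∀ i, f i ∈ P := by
  obtain ⟨g, hg⟩ := exists_linearIndependent_of_le_finrank (R := ℂ) (M := P) hP
  exact ⟨fun i => (g i : E), hg.map' P.subtype P.ker_subtype, fun i => (g i).2⟩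

lemma exists_sub_avoiding (U : Submodule ℂ E) (w : E) (hw : w ≠ 0) (l : ℕ)
    (h : l + 1 ≤ finrank ℂ (U ⊔ span ℂ {w} : Submodule ℂ E)) :
    ∃ U₀ : Submodule ℂ E, U₀ ≤ U ∧ finrank ℂ U₀ = l ∧ w ∉ U₀ := by
  set S : Submodule ℂ E := U ⊔ span ℂ {w} with hS
  set π := (span ℂ {w}).mkQ with hπ
  have hwS : span ℂ {w} ≤ S := le_sup_right
  have hmapS : Submodule.map π S = Submodule.map π U := by
    rw [hS, Submodule.map_sup]
    have hz : Submodule.map π (span ℂ {w}) = ⊥ := by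
      rw [Submodule.map_span]
      have : π w = 0 := by
        rw [hπ, Submodule.mkQ_apply, Submodule.Quotient.mk_eq_zero]
        exact Submodule.mem_span_singleton_self w
      simp [this]
    rw [hz, sup_bot_eq]
  have hrank : l ≤ finrank ℂ (Submodule.map π U) := by
    have hf := LinearMap.finrank_range_add_finrank_ker (π.comp S.subtype)
    have hr : LinearMap.range (π.comp S.subtype) = Submodule.map π S := by
      rw [LinearMap.range_comp, Submodule.range_subtype]
    have hk : LinearMap.ker (π.comp S.subtype) = Submodule.comap S.subtype (span ℂ {w}) := by
      rw [LinearMap.ker_comp, hπ, Submodule.ker_mkQ]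
    have hkr : finrank ℂ (LinearMap.ker (π.comp S.subtype)) = 1 := by
      rw [hk, (Submodule.comapSubtypeEquivOfLe hwS).finrank_eq, finrank_span_singleton hw]
    rw [hr, hmapS, hkr] at hf
    omega
  obtain ⟨y, hy, hyP⟩ := sub_li (Submodule.map π U) l hrank
  choose u hu hhu using fun i => Submodule.mem_map.mp (hyP i)
  have hcomp : π ∘ u = y := funext hhu
  have hliu : LinearIndependent ℂ u := LinearIndependent.of_comp π (hcomp ▸ hy)
  refine ⟨span ℂ (Set.range u), Submodule.span_le.mpr (Set.range_subset_iff.mpr hu), ?_, ?_⟩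
  · rw [finrank_span_eq_card hliu, Fintype.card_fin]
  · intro hwU
    have hdis := Submodule.range_ker_disjoint (hcomp ▸ hy)
    have hwk : w ∈ LinearMap.ker π := by
      rw [hπ, Submodule.ker_mkQ]; exact Submodule.mem_span_singleton_self w
    exact hw (Submodule.disjoint_def.mp hdis w hwU hwk)

lemma step1 {U V W : Submodule ℂ E} (n l : ℕ) (hUV : U ≤ V)
    (hE : finrank ℂ E = n) (hn : 0 < n)
    (hVW : V ⊔ W = ⊤) (hV : n - 1 ≤ finrank ℂ V)
    (hUW : l + 1 ≤ finrank ℂ (U ⊔ W : Submodule ℂ E)) (hU : l ≤ finrank ℂ U)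
    (hWbot : W ≠ ⊥) :
    ∃ w ∈ W, w ≠ 0 ∧ V ⊔ span ℂ {w} = ⊤ ∧
      l + 1 ≤ finrank ℂ (U ⊔ span ℂ {w} : Submodule ℂ E) := by
  have key : ∀ w : E, w ∈ W → w ∉ U →
      l + 1 ≤ finrank ℂ (U ⊔ span ℂ {w} : Submodule ℂ E) := by
    intro w hwW hwU
    have hw0 : w ≠ 0 := fun h => hwU (h ▸ U.zero_mem)
    have hd : U ⊓ span ℂ {w} = ⊥ :=
      ((Submodule.disjoint_span_singleton' hw0).mpr hwU).eq_bot
    have := Submodule.finrank_sup_add_finrank_inf_eq U (span ℂ {w})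
    rw [hd, finrank_bot, finrank_span_singleton hw0] at this
    omega
  by_cases hVtop : V = ⊤
  · by_cases hWU : W ≤ U
    · obtain ⟨w, hwW, hw0⟩ := Submodule.exists_mem_ne_zero_of_ne_bot hWbot
      refine ⟨w, hwW, hw0, by simp [hVtop], ?_⟩
      have hsw : span ℂ {w} ≤ U := (Submodule.span_singleton_le_iff_mem w U).mpr (hWU hwW)
      have hUW' : U ⊔ W = U := sup_eq_left.mpr hWU
      rw [sup_eq_left.mpr hsw, ← hUW']
      exact hUW
    · obtain ⟨w, hwW, hwU⟩ := SetLike.not_le_iff_exists.mp hWU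
      have hw0 : w ≠ 0 := fun h => hwU (h ▸ U.zero_mem)
      exact ⟨w, hwW, hw0, by simp [hVtop], key w hwW hwU⟩
  · have hWV : ¬ W ≤ V := fun h => hVtop (by rw [← hVW, sup_eq_left.mpr h])
    obtain ⟨w, hwW, hwV⟩ := SetLike.not_le_iff_exists.mp hWV
    have hwU : w ∉ U := fun h => hwV (hUV h)
    have hw0 : w ≠ 0 := fun h => hwV (h ▸ V.zero_mem)
    refine ⟨w, hwW, hw0, ?_, key w hwW hwU⟩
    apply Submodule.eq_top_of_finrank_eq
    have hd : V ⊓ span ℂ {w} = ⊥ :=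
      ((Submodule.disjoint_span_singleton' hw0).mpr hwV).eq_bot
    have h2 := Submodule.finrank_sup_add_finrank_inf_eq V (span ℂ {w})
    rw [hd, finrank_bot, finrank_span_singleton hw0] at h2
    have hle : finrank ℂ (V ⊔ span ℂ {w} : Submodule ℂ E) ≤ n := hE ▸ Submodule.finrank_le _
    omega

lemma assemble (n l : ℕ) (hE : finrank ℂ E = n) (hn : 0 < n) (hl : l ≤ n - 1)
    (U V W : Submodule ℂ E) (hUV : U ≤ V)
    (hV : n - 1 ≤ finrank ℂ V) (hU : l ≤ finrank ℂ U) (hWbot : W ≠ ⊥)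
    (hUW : l + 1 ≤ finrank ℂ (U ⊔ W : Submodule ℂ E)) (hVW : V ⊔ W = ⊤) :
    ∃ v : Fin n → E, LinearIndependent ℂ v ∧
      (∀ i : Fin n, (i : ℕ) < l → v i ∈ U) ∧
      (∀ i : Fin n, l ≤ (i : ℕ) → (i : ℕ) < n - 1 → v i ∈ V) ∧
      (∀ i : Fin n, (i : ℕ) = n - 1 → v i ∈ W) := by
  obtain ⟨w, hwW, hw0, hVtop, hUw⟩ := step1 n l hUV hE hn hVW hV hUW hU hWbot
  obtain ⟨U₀, hU₀U, hU₀rank, hwU₀⟩ := exists_sub_avoiding U w hw0 l hUw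
  set S : Submodule ℂ E := U₀ ⊔ span ℂ {w} with hSdef
  have hdisj : U₀ ⊓ span ℂ {w} = ⊥ :=
    ((Submodule.disjoint_span_singleton' hw0).mpr hwU₀).eq_bot
  have hSrank : finrank ℂ S = l + 1 := by
    have := Submodule.finrank_sup_add_finrank_inf_eq U₀ (span ℂ {w})
    rw [hdisj, finrank_bot, finrank_span_singleton hw0, hU₀rank, ← hSdef] at this
    omega
  -- the family inside S
  obtain ⟨u, hliu, hu⟩ := sub_li U₀ l (le_of_eq hU₀rank.symm)
  have huS : ∀ i, u i ∈ S := fun i => Submodule.mem_sup_left (hu i)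
  have hwS : w ∈ S := Submodule.mem_sup_right (Submodule.mem_span_singleton_self w)
  have hliF : LinearIndependent ℂ (Sum.elim u (fun _ : Fin 1 => w)) := by
    apply LinearIndependent.sum_type hliu (linearIndependent_unique_iff.mpr hw0)
    have h1 : span ℂ (Set.range u) ≤ U₀ :=
      Submodule.span_le.mpr (Set.range_subset_iff.mpr hu)
    have h2 : span ℂ (Set.range fun _ : Fin 1 => w) = span ℂ {w} := by
      rw [Set.range_const]
    rw [h2]
    exact Disjoint.mono_left h1 ((Submodule.disjoint_span_singleton' hw0).mpr hwU₀)
  set F : Fin l ⊕ Fin 1 → S := fun j => ⟨Sum.elim u (fun _ : Fin 1 => w) j,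
    by cases j with
    | inl i => exact huS i
    | inr i => exact hwS⟩ with hFdef
  have hliFS : LinearIndependent ℂ F := by
    apply LinearIndependent.of_comp S.subtype
    convert hliF using 1
    funext j; cases j <;> rfl
  -- the quotient family
  have hVS : V ⊔ S = ⊤ := by
    rw [hSdef, ← sup_assoc, sup_eq_left.mpr (le_trans hU₀U hUV), hVtop]
  have hmapV : Submodule.map S.mkQ V = ⊤ := by
    have h1 : Submodule.map S.mkQ (V ⊔ S) = ⊤ := by
      rw [hVS, Submodule.map_top, Submodule.range_mkQ]
    rw [Submodule.map_sup] at h1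
    have h2 : Submodule.map S.mkQ S = ⊥ := by
      rw [eq_bot_iff]
      rintro z ⟨a, ha, rfl⟩
      rw [Submodule.mem_bot, Submodule.mkQ_apply, Submodule.Quotient.mk_eq_zero]
      exact ha
    rw [h2, sup_bot_eq] at h1
    exact h1
  have hQrank : n - 1 - l ≤ finrank ℂ (Submodule.map S.mkQ V) := by
    rw [hmapV]
    have := Submodule.finrank_quotient_add_finrank S
    rw [hSrank, hE] at this
    have htop : finrank ℂ (⊤ : Submodule ℂ (E ⧸ S)) = finrank ℂ (E ⧸ S) := finrank_top ℂ _
    omega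
  obtain ⟨y, hliy, hy⟩ := sub_li (Submodule.map S.mkQ V) (n - 1 - l) hQrank
  choose x hxV hxy using fun i => Submodule.mem_map.mp (hy i)
  have hxq : (Submodule.Quotient.mk (p := S)) ∘ x = y := by
    funext i
    simp only [Function.comp_apply, ← Submodule.mkQ_apply, hxy]
  have hli : LinearIndependent ℂ (Sum.elim (fun j => (F j : E)) x) :=
    LinearIndependent.sumElim_of_quotient hliFS x (by rw [hxq]; exact hliy)
  -- reindex
  set G := Sum.elim (fun j => (F j : E)) x with hGdef
  set g : Fin n → (Fin l ⊕ Fin 1) ⊕ Fin (n - 1 - l) := fun i =>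
    if h : (i : ℕ) < l then .inl (.inl ⟨i, h⟩)
    else if h' : (i : ℕ) < n - 1 then .inr ⟨(i : ℕ) - l, by omega⟩
    else .inl (.inr 0) with hgdef
  have hginj : Function.Injective g := by
    intro a b hab
    have ha := a.isLt; have hb := b.isLt
    simp only [hgdef] at hab
    split_ifs at hab <;>
      first
      | (simp only [Sum.inl.injEq, Sum.inr.injEq, Fin.mk.injEq] at hab
         exact Fin.ext (by omega))
      | (simp at hab)
  refine ⟨G ∘ g, hli.comp g hginj, ?_, ?_, ?_⟩
  · intro i hi
    have : (G ∘ g) i = u ⟨i, hi⟩ := by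
      simp only [Function.comp_apply, hgdef, dif_pos hi, hGdef, Sum.elim_inl, hFdef, Sum.elim_inl]
    rw [this]; exact hU₀U (hu ⟨i, hi⟩)
  · intro i hli' hi
    have : (G ∘ g) i = x ⟨(i : ℕ) - l, by omega⟩ := by
      simp only [Function.comp_apply, hgdef, dif_neg (by omega : ¬ (i : ℕ) < l), dif_pos hi,
        hGdef, Sum.elim_inr]
    rw [this]; exact hxV _
  · intro i hi
    have : (G ∘ g) i = w := by
      simp only [Function.comp_apply, hgdef, dif_neg (by omega : ¬ (i : ℕ) < l),
        dif_neg (by omega : ¬ (i : ℕ) < n - 1), hGdef, Sum.elim_inl, hFdef, Sum.elim_inr]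
    rw [this]
    exact hwW

end helpers

theorem stmt13 (n l : ℕ) (hn : 0 < n) (hl : l ≤ n - 1)
    (A B C : Matrix (Fin n) (Fin n) ℂ)
    (hA : A.PosSemidef) (hB : B.PosSemidef) (hC : C.PosSemidef)
    (hBA : (B - A).PosSemidef)
    (hrB : n - 1 ≤ B.rank) (hrA : l ≤ A.rank) (hrC : 1 ≤ C.rank)
    (hrAC : l + 1 ≤ (A + C).rank) (hrBC : (B + C).rank = n) :
    ∃ v : Fin n → (Fin n → ℂ), LinearIndependent ℂ v ∧
      (∀ i : Fin n, (i : ℕ) < l → v i ∈ LinearMap.range A.mulVecLin) ∧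
      (∀ i : Fin n, l ≤ (i : ℕ) → (i : ℕ) < n - 1 → v i ∈ LinearMap.range B.mulVecLin) ∧
      (∀ i : Fin n, (i : ℕ) = n - 1 → v i ∈ LinearMap.range C.mulVecLin) := by
  have hE : finrank ℂ (Fin n → ℂ) = n := by simp
  set U := LinearMap.range A.mulVecLin with hUdef
  set V := LinearMap.range B.mulVecLin with hVdef
  set W := LinearMap.range C.mulVecLin with hWdef
  have hUV : U ≤ V := psd_range_le hA hB hBA
  have hsum : ∀ (M N : Matrix (Fin n) (Fin n) ℂ),
      LinearMap.range (M + N).mulVecLin ≤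
        LinearMap.range M.mulVecLin ⊔ LinearMap.range N.mulVecLin := by
    rintro M N _ ⟨z, rfl⟩
    rw [Matrix.mulVecLin_add]
    exact Submodule.add_mem_sup (LinearMap.mem_range_self _ z) (LinearMap.mem_range_self _ z)
  have hVW : V ⊔ W = ⊤ := by
    apply Submodule.eq_top_of_finrank_eq
    rw [hE]
    refine le_antisymm (le_trans (Submodule.finrank_le _) (le_of_eq hE)) ?_
    calc n = (B + C).rank := hrBC.symm
    _ ≤ finrank ℂ (V ⊔ W : Submodule ℂ (Fin n → ℂ)) := Submodule.finrank_mono (hsum B C)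
  have hUW : l + 1 ≤ finrank ℂ (U ⊔ W : Submodule ℂ (Fin n → ℂ)) :=
    le_trans hrAC (Submodule.finrank_mono (hsum A C))
  have hWbot : W ≠ ⊥ := by
    intro h
    rw [Matrix.rank, ← hWdef, h, finrank_bot] at hrC
    omega
  obtain ⟨v, h1, h2, h3, h4⟩ := assemble n l hE hn hl U V W hUV hrB hrA hWbot hUW hVW
  exact ⟨v, h1, h2, h3, h4⟩
end

section
/- For n×n Hermitian positive semidefinite matrices, the rank function is submodular with respect to sums: if x, y, z are positive semidefinite matrices then rank(x + y + z) ≤ rank(x + y) + rank(y + z) − rank(y). -/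
open scoped ComplexOrder

open Matrix Module

lemma ker_add_psd {n : ℕ} {M N : Matrix (Fin n) (Fin n) ℂ}
    (hM : M.PosSemidef) (hN : N.PosSemidef) :
    LinearMap.ker (M + N).mulVecLin =
      LinearMap.ker M.mulVecLin ⊓ LinearMap.ker N.mulVecLin := by
  ext v
  simp only [LinearMap.mem_ker, Matrix.mulVecLin_apply, Submodule.mem_inf]
  constructor
  · intro h
    have h0 : star v ⬝ᵥ (M + N) *ᵥ v = 0 := by rw [h, dotProduct_zero]
    rw [Matrix.add_mulVec, dotProduct_add] at h0
    have hm := hM.dotProduct_mulVec_nonneg v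
    have hn := hN.dotProduct_mulVec_nonneg v
    have hM0 : star v ⬝ᵥ M *ᵥ v = 0 := le_antisymm (by
      have : star v ⬝ᵥ M *ᵥ v = -(star v ⬝ᵥ N *ᵥ v) := by linear_combination h0
      rw [this]; simpa using hn) hm
    have hN0 : star v ⬝ᵥ N *ᵥ v = 0 := by
      have : star v ⬝ᵥ N *ᵥ v = -(star v ⬝ᵥ M *ᵥ v) := by linear_combination h0
      rw [this, hM0, neg_zero]
    exact ⟨(hM.dotProduct_mulVec_zero_iff v).mp hM0,
      (hN.dotProduct_mulVec_zero_iff v).mp hN0⟩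
  · rintro ⟨h1, h2⟩
    rw [Matrix.add_mulVec, h1, h2, add_zero]

theorem stmt14 (n : ℕ) (x y z : Matrix (Fin n) (Fin n) ℂ)
    (hx : x.PosSemidef) (hy : y.PosSemidef) (hz : z.PosSemidef) :
    (x + y + z).rank + y.rank ≤ (x + y).rank + (y + z).rank := by
  set a := LinearMap.ker x.mulVecLin
  set b := LinearMap.ker y.mulVecLin
  set c := LinearMap.ker z.mulVecLin
  have hxy : LinearMap.ker (x + y).mulVecLin = a ⊓ b := ker_add_psd hx hy
  have hyz : LinearMap.ker (y + z).mulVecLin = b ⊓ c := ker_add_psd hy hz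
  have hxyz : LinearMap.ker (x + y + z).mulVecLin = (a ⊓ b) ⊓ c := by
    rw [ker_add_psd (hx.add hy) hz, hxy]
  have rn : ∀ M : Matrix (Fin n) (Fin n) ℂ,
      M.rank + finrank ℂ (LinearMap.ker M.mulVecLin) = n := by
    intro M
    have := LinearMap.finrank_range_add_finrank_ker M.mulVecLin
    simpa [Matrix.rank] using this
  have h1 := rn (x + y + z)
  have h2 : y.rank + finrank ℂ ↥b = n := rn y
  have h3 := rn (x + y)
  have h4 := rn (y + z)
  rw [hxyz] at h1
  rw [hxy] at h3
  rw [hyz] at h4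
  have heq : (a ⊓ b) ⊓ (b ⊓ c) = (a ⊓ b) ⊓ c := by
    ext v; simp only [Submodule.mem_inf]; tauto
  have key : finrank ℂ ↥(a ⊓ b) + finrank ℂ ↥(b ⊓ c)
      ≤ finrank ℂ ↥((a ⊓ b) ⊓ c) + finrank ℂ ↥b := by
    have hsup : (a ⊓ b) ⊔ (b ⊓ c) ≤ b := sup_le inf_le_right inf_le_left
    calc finrank ℂ ↥(a ⊓ b) + finrank ℂ ↥(b ⊓ c)
        = finrank ℂ ↥((a ⊓ b) ⊔ (b ⊓ c)) + finrank ℂ ↥((a ⊓ b) ⊓ (b ⊓ c)) :=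
          (Submodule.finrank_sup_add_finrank_inf_eq _ _).symm
      _ ≤ finrank ℂ ↥b + finrank ℂ ↥((a ⊓ b) ⊓ c) := by
          rw [heq]; gcongr; exact Submodule.finrank_mono hsup
      _ = finrank ℂ ↥((a ⊓ b) ⊓ c) + finrank ℂ ↥b := by ring
  omega
end

section
/- Suppose a set {X₁,...,Xₘ} of points in ℂⁿ and complex numbers c₁,...,cₘ satisfy: for every homogeneous polynomial p of degree n in n complex variables, ∂ⁿp/∂x₁···∂xₙ = ∑_{i=1}^{m} cᵢ p(Xᵢ). Then m ≥ C(n, ⌊n/2⌋) = n!/(⌊n/2⌋!·(n−⌊n/2⌋)!). -/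
open MvPolynomial

lemma prod_X_eq_monomial' {n : ℕ} (A : Finset (Fin n)) :
    (∏ i ∈ A, (X i : MvPolynomial (Fin n) ℂ)) =
      monomial (∑ i ∈ A, Finsupp.single i 1) 1 := by
  classical
  induction A using Finset.induction_on with
  | empty => simp
  | insert _ _ hA ih =>
      rw [Finset.prod_insert hA, ih, Finset.sum_insert hA, X, monomial_mul, one_mul]

theorem stmt15 (n m : ℕ) (X : Fin m → Fin n → ℂ) (c : Fin m → ℂ)
    (h : ∀ p : MvPolynomial (Fin n) ℂ, p.IsHomogeneous n →
      p.coeff (Finsupp.equivFunOnFinite.symm fun _ => 1) = ∑ i, c i * eval (X i) p) :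
    Nat.choose n (n / 2) ≤ m := by
  classical
  set k := n / 2 with hk
  set K := {s : Finset (Fin n) // s.card = k}
  set W : Matrix K (Fin m) ℂ := fun s j => c j * ∏ i ∈ s.1, X j i with hW
  set V : Matrix (Fin m) K ℂ := fun j t => ∏ i ∈ t.1ᶜ, X j i with hV
  have hWV : W * V = 1 := by
    ext s t
    have hcard : s.1.card + t.1ᶜ.card = n := by
      rw [Finset.card_compl, s.2, t.2, Fintype.card_fin]
      exact Nat.add_sub_cancel' (Nat.div_le_self n 2)
    set p : MvPolynomial (Fin n) ℂ :=
      (∏ i ∈ s.1, MvPolynomial.X i) * ∏ i ∈ t.1ᶜ, MvPolynomial.X i with hp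
    have hhom : p.IsHomogeneous n := by
      rw [hp]
      have h1 : (∏ i ∈ s.1, (MvPolynomial.X i : MvPolynomial (Fin n) ℂ)).IsHomogeneous s.1.card := by
        have := MvPolynomial.IsHomogeneous.prod s.1
          (fun i => (MvPolynomial.X i : MvPolynomial (Fin n) ℂ)) (fun _ => 1)
          (fun i _ => isHomogeneous_X ℂ i)
        simpa using this
      have h2 : (∏ i ∈ t.1ᶜ, (MvPolynomial.X i : MvPolynomial (Fin n) ℂ)).IsHomogeneous t.1ᶜ.card := by
        have := MvPolynomial.IsHomogeneous.prod t.1ᶜ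
          (fun i => (MvPolynomial.X i : MvPolynomial (Fin n) ℂ)) (fun _ => 1)
          (fun i _ => isHomogeneous_X ℂ i)
        simpa using this
      have := h1.mul h2
      rwa [hcard] at this
    have hco := h p hhom
    have hcoeff : p.coeff (Finsupp.equivFunOnFinite.symm fun _ => 1) =
        if s = t then 1 else 0 := by
      rw [hp, prod_X_eq_monomial', prod_X_eq_monomial', monomial_mul, one_mul,
        coeff_monomial]
      have hiff : ((∑ i ∈ s.1, Finsupp.single i 1) + ∑ i ∈ t.1ᶜ, Finsupp.single i (1:ℕ)) =
          (Finsupp.equivFunOnFinite.symm fun _ => 1) ↔ s = t := by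
        constructor
        · intro hd
          have hval : ∀ j : Fin n,
              ((if j ∈ s.1 then 1 else 0) + (if j ∈ t.1ᶜ then 1 else 0) : ℕ) = 1 := by
            intro j
            have := DFunLike.congr_fun hd j
            simpa [Finsupp.finset_sum_apply, Finsupp.single_apply,
              Finset.sum_ite_eq', Finsupp.equivFunOnFinite] using this
          apply Subtype.ext
          ext j
          have hj := hval j
          constructor
          · intro hjs
            by_contra hjt
            simp [hjs, Finset.mem_compl, hjt] at hj
          · intro hjt
            by_contra hjs
            simp [hjs, Finset.mem_compl, hjt] at hj
        · rintro rfl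
          ext j
          simp [Finsupp.finset_sum_apply, Finsupp.single_apply,
            Finset.sum_ite_eq', Finsupp.equivFunOnFinite, Finset.mem_compl]
          by_cases hj : j ∈ s.1 <;> simp [hj]
      rw [if_congr hiff rfl rfl]
    have heval : ∀ j, eval (X j) p = (∏ i ∈ s.1, X j i) * ∏ i ∈ t.1ᶜ, X j i := by
      intro j
      simp [hp]
    rw [hcoeff] at hco
    have : (W * V) s t = ∑ j, c j * eval (X j) p := by
      rw [Matrix.mul_apply]
      simp only [hW, hV]
      exact Finset.sum_congr rfl fun j _ => by rw [heval j]; ring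
    rw [this, ← hco]
    simp [Matrix.one_apply]
  have hrank : Fintype.card K ≤ Fintype.card (Fin m) := by
    calc Fintype.card K = (1 : Matrix K K ℂ).rank := (Matrix.rank_one).symm
      _ = (W * V).rank := by rw [hWV]
      _ ≤ W.rank := Matrix.rank_mul_le_left W V
      _ ≤ Fintype.card (Fin m) := Matrix.rank_le_card_width W
  have hcardK : Fintype.card K = Nat.choose n k := by
    simp [K, Fintype.card_finset_len]
  rw [hcardK, Fintype.card_fin] at hrank
  exact hrank
end

section
/- Let f : ℝⁿ → ℝ be a convex differentiable function with inf{f(y) : ∑ᵢ yᵢ = 0} > −∞, and suppose the Euler-type identity ∑ᵢ ∂f/∂yᵢ(y) = n holds for all y (as it does for f(y) = log q(e^{y₁},...,e^{yₙ}) with q homogeneous of degree n with positive coefficients). Then for every ε > 0 there exists a point y with ∑ᵢ yᵢ = 0 and ∑ᵢ (∂f/∂yᵢ(y) − 1)² ≤ ε. -/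
set_option maxHeartbeats 1000000 in
theorem stmt16 (n : ℕ) (f : (Fin n → ℝ) → ℝ)
    (hconv : ConvexOn ℝ Set.univ f) (hdiff : Differentiable ℝ f)
    (hbdd : ∃ L : ℝ, ∀ y : Fin n → ℝ, ∑ i, y i = 0 → L ≤ f y)
    (heuler : ∀ y : Fin n → ℝ, ∑ i, fderiv ℝ f y (Pi.single i 1) = (n : ℝ)) :
    ∀ ε : ℝ, 0 < ε → ∃ y : Fin n → ℝ, ∑ i, y i = 0 ∧
      ∑ i, (fderiv ℝ f y (Pi.single i 1) - 1) ^ 2 ≤ ε := by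
  intro ε hε
  obtain ⟨L, hL⟩ := hbdd
  have h0 : (∑ i, (0 : Fin n → ℝ) i) = 0 := by simp
  set C : ℝ := f 0 - L with hCdef
  have hC : 0 ≤ C := by have := hL 0 h0; linarith
  set σ : ℝ := ε / (4 * (C + 1)) with hσdef
  have hσ : 0 < σ := by positivity
  set R2 : ℝ := C / σ + 1 with hR2def
  have hR2 : 0 < R2 := by positivity
  -- the compact set
  set K : Set (Fin n → ℝ) := {w | ∑ i, w i = 0 ∧ ∑ i, (w i) ^ 2 ≤ R2} with hKdef
  have h0K : (0 : Fin n → ℝ) ∈ K := by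
    constructor
    · simp
    · simp; positivity
  have hKclosed : IsClosed K := by
    have h1 : IsClosed {w : Fin n → ℝ | ∑ i, w i = 0} :=
      isClosed_eq (by continuity) continuous_const
    have h2 : IsClosed {w : Fin n → ℝ | ∑ i, (w i) ^ 2 ≤ R2} :=
      isClosed_le (by continuity) continuous_const
    exact h1.inter h2
  have hKsub : K ⊆ Metric.closedBall 0 (Real.sqrt R2) := by
    intro w hw
    rw [Metric.mem_closedBall, dist_zero_right]
    rw [pi_norm_le_iff_of_nonneg (Real.sqrt_nonneg _)]
    intro i
    have h1 : (w i) ^ 2 ≤ R2 := by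
      refine le_trans ?_ hw.2
      exact Finset.single_le_sum (fun j _ => sq_nonneg (w j)) (Finset.mem_univ i)
    rw [Real.norm_eq_abs, ← Real.sqrt_sq_eq_abs]
    exact Real.sqrt_le_sqrt h1
  have hKcompact : IsCompact K :=
    (isCompact_closedBall _ _).of_isClosed_subset hKclosed hKsub
  -- minimize F = f + σ * ∑ w i ^ 2 over K
  have hFcont : ContinuousOn (fun w : Fin n → ℝ => f w + σ * ∑ i, (w i) ^ 2) K := by
    apply Continuous.continuousOn
    exact hdiff.continuous.add (continuous_const.mul (by continuity))
  obtain ⟨z, hzK, hzmin⟩ := hKcompact.exists_isMinOn ⟨0, h0K⟩ hFcont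
  -- basic bound on the minimizer
  have hFz : f z + σ * ∑ i, (z i) ^ 2 ≤ f 0 := by
    have := hzmin h0K
    simpa using this
  have hLz : L ≤ f z := hL z hzK.1
  have hz2 : σ * ∑ i, (z i) ^ 2 ≤ C := by rw [hCdef]; linarith
  have hz2' : ∑ i, (z i) ^ 2 ≤ C / σ := by
    rw [le_div_iff₀ hσ]; linarith [hz2]
  have hz2lt : ∑ i, (z i) ^ 2 < R2 := by rw [hR2def]; linarith
  -- the direction v
  set g : Fin n → ℝ := fun i => fderiv ℝ f z (Pi.single i 1) with hgdef
  set v : Fin n → ℝ := fun i => g i - 1 with hvdef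
  have hsumv : ∑ i, v i = 0 := by
    have := heuler z
    simp only [hvdef, Finset.sum_sub_distrib]
    simp [hgdef, this]
  -- v as a combination of basis vectors
  have hvsum : v = ∑ i, v i • (Pi.single i 1 : Fin n → ℝ) := by
    funext j
    rw [Finset.sum_apply]
    simp only [Pi.smul_apply, smul_eq_mul, Pi.single_apply]
    rw [Finset.sum_eq_single j]
    · simp
    · intro b _ hb; simp [Ne.symm hb]
    · intro h; exact absurd (Finset.mem_univ j) h
  have hDv : fderiv ℝ f z v = ∑ i, v i * g i := by
    conv_lhs => rw [hvsum]
    rw [map_sum]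
    simp [hgdef]
  have hDv2 : fderiv ℝ f z v = ∑ i, (v i) ^ 2 := by
    rw [hDv]
    have : ∑ i, v i * g i = ∑ i, (v i * (g i - 1) + v i) := by
      apply Finset.sum_congr rfl; intro i _; ring
    rw [this, Finset.sum_add_distrib, hsumv, add_zero]
    apply Finset.sum_congr rfl; intro i _
    simp only [hvdef]; ring
  -- local minimum along the line t ↦ z + t • v
  have hmemK : ∀ᶠ t : ℝ in nhds 0, z + t • v ∈ K := by
    have hcont : Continuous fun t : ℝ => ∑ i, ((z + t • v) i) ^ 2 := by
      apply continuous_finset_sum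
      intro i _
      simp only [Pi.add_apply, Pi.smul_apply, smul_eq_mul]
      exact (continuous_const.add (continuous_id.mul continuous_const)).pow 2
    have h0lt : (fun t : ℝ => ∑ i, ((z + t • v) i) ^ 2) 0 < R2 := by
      simpa using hz2lt
    have hev1 : ∀ᶠ t : ℝ in nhds 0, ∑ i, ((z + t • v) i) ^ 2 < R2 :=
      hcont.continuousAt.eventually_lt continuousAt_const h0lt
    filter_upwards [hev1] with t ht
    constructor
    · simp only [Pi.add_apply, Pi.smul_apply, smul_eq_mul, Finset.sum_add_distrib,
        ← Finset.mul_sum, hzK.1, hsumv, mul_zero, add_zero]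
    · exact le_of_lt ht
  have hlocmin : IsLocalMin (fun t : ℝ => f (z + t • v) + σ * ∑ i, ((z + t • v) i) ^ 2) 0 := by
    filter_upwards [hmemK] with t ht
    have := hzmin ht
    simpa using this
  -- derivative of the 1-d function
  have hcurve : HasDerivAt (fun t : ℝ => z + t • v) v 0 := by
    have h1 : HasDerivAt (fun t : ℝ => t • v) ((1 : ℝ) • v) 0 :=
      (hasDerivAt_id 0).smul_const v
    simpa using h1.const_add z
  have hd1 : HasDerivAt (fun t : ℝ => f (z + t • v)) (fderiv ℝ f z v) 0 := by
    have hf : HasFDerivAt f (fderiv ℝ f z) (z + (0 : ℝ) • v) := by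
      simpa using (hdiff (z + (0 : ℝ) • v)).hasFDerivAt
    exact hf.comp_hasDerivAt 0 hcurve
  have hd2 : HasDerivAt (fun t : ℝ => ∑ i, ((z + t • v) i) ^ 2)
      (∑ i, 2 * z i * v i) 0 := by
    have := HasDerivAt.fun_sum (u := Finset.univ)
      (A := fun i (t : ℝ) => ((z + t • v) i) ^ 2)
      (A' := fun i => 2 * z i * v i) (x := (0 : ℝ)) ?_
    · exact this
    · intro i _
      have h1 : HasDerivAt (fun t : ℝ => z i + t * v i) (v i) 0 := by
        simpa using ((hasDerivAt_id (0:ℝ)).mul_const (v i)).const_add (z i)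
      have h2 := h1.fun_pow 2
      simp only [Pi.add_apply, Pi.smul_apply, smul_eq_mul]
      convert h2 using 1
      · rfl
      · norm_num
  have hd : HasDerivAt (fun t : ℝ => f (z + t • v) + σ * ∑ i, ((z + t • v) i) ^ 2)
      (fderiv ℝ f z v + σ * ∑ i, 2 * z i * v i) 0 :=
    hd1.add (hd2.const_mul σ)
  have hzero : fderiv ℝ f z v + σ * ∑ i, 2 * z i * v i = 0 :=
    hlocmin.hasDerivAt_eq_zero hd
  -- now the estimate
  set S : ℝ := ∑ i, (v i) ^ 2 with hSdef
  have hSnn : 0 ≤ S := Finset.sum_nonneg fun i _ => sq_nonneg _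
  have hSeq : S = -(σ * ∑ i, 2 * z i * v i) := by
    rw [← hDv2]; linarith [hzero]
  -- Cauchy-Schwarz
  have hCS : (∑ i, z i * v i) ^ 2 ≤ (∑ i, (z i) ^ 2) * S := by
    rw [hSdef]
    exact Finset.sum_mul_sq_le_sq_mul_sq Finset.univ _ _
  have hS2 : S ^ 2 ≤ 4 * σ ^ 2 * ((∑ i, (z i) ^ 2) * S) := by
    have hswap : ∑ i, 2 * z i * v i = 2 * ∑ i, z i * v i := by
      rw [Finset.mul_sum]; apply Finset.sum_congr rfl; intro i _; ring
    have h1 : S = -(2 * σ) * ∑ i, z i * v i := by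
      rw [hSeq, hswap]; ring
    calc S ^ 2 = 4 * σ ^ 2 * (∑ i, z i * v i) ^ 2 := by rw [h1]; ring
    _ ≤ 4 * σ ^ 2 * ((∑ i, (z i) ^ 2) * S) := by
        apply mul_le_mul_of_nonneg_left hCS; positivity
  have hzsum : ∑ i, z i = 0 := hzK.1
  clear_value K g v S σ C R2
  have hfinal : S ≤ ε := by
    rcases eq_or_lt_of_le hSnn with h | h
    · rw [← h]; exact le_of_lt hε
    · have hS' : S ≤ 4 * σ ^ 2 * ∑ i, (z i) ^ 2 := by
        have h' : S * S ≤ (4 * σ ^ 2 * ∑ i, (z i) ^ 2) * S := by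
          calc S * S = S ^ 2 := by ring
          _ ≤ 4 * σ ^ 2 * ((∑ i, (z i) ^ 2) * S) := hS2
          _ = (4 * σ ^ 2 * ∑ i, (z i) ^ 2) * S := by ring
        exact le_of_mul_le_mul_right h' h
      have h3 : 4 * σ ^ 2 * ∑ i, (z i) ^ 2 ≤ 4 * σ * C := by
        have h4σ : (0:ℝ) ≤ 4 * σ := by positivity
        calc 4 * σ ^ 2 * ∑ i, (z i) ^ 2 = 4 * σ * (σ * ∑ i, (z i) ^ 2) := by ring
        _ ≤ 4 * σ * C := mul_le_mul_of_nonneg_left hz2 h4σ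
      have h4 : 4 * σ * C ≤ 4 * σ * (C + 1) := by
        have h4σ : (0:ℝ) ≤ 4 * σ := by positivity
        have : C ≤ C + 1 := by linarith
        exact mul_le_mul_of_nonneg_left this h4σ
      have h5 : 4 * σ * (C + 1) = ε := by
        rw [hσdef]; field_simp
      linarith
  exact ⟨z, hzsum, by simpa [hSdef, hvdef, hgdef] using hfinal⟩
end

section
/- Let Pₖ(t) = ∑_{i=0}^{n} a_{i,k} tⁱ be a sequence of real univariate polynomials of degree n whose coefficients converge: a_{i,k} → aᵢ as k → ∞ for each i, with aₙ ≠ 0, and let P(t) = ∑ᵢ aᵢ tⁱ. If all roots of every Pₖ are real, then all roots of P are real; if moreover all roots of every Pₖ are real and nonnegative, then all roots of P are real and nonnegative. -/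
open Polynomial Finset Filter

private lemma coeff_sumpoly (n : ℕ) (c : ℕ → ℝ) (j : ℕ) :
    (∑ i ∈ Finset.range (n + 1), C (c i) * X ^ i).coeff j =
      if j ≤ n then c j else 0 := by
  simp [Polynomial.finset_sum_coeff, Polynomial.coeff_C_mul, Polynomial.coeff_X_pow,
    Finset.sum_ite_eq', Nat.lt_succ_iff]

private lemma natdeg_sumpoly (n : ℕ) (c : ℕ → ℝ) (hc : c n ≠ 0) :
    (∑ i ∈ Finset.range (n + 1), C (c i) * X ^ i).natDegree = n := by
  apply le_antisymm
  · apply Polynomial.natDegree_sum_le_of_forall_le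
    intro i hi
    exact (Polynomial.natDegree_C_mul_X_pow_le _ _).trans
      (Nat.lt_succ_iff.mp (Finset.mem_range.mp hi))
  · apply Polynomial.le_natDegree_of_ne_zero
    rw [coeff_sumpoly]; simpa

private lemma lc_sumpoly (n : ℕ) (c : ℕ → ℝ) (hc : c n ≠ 0) :
    (∑ i ∈ Finset.range (n + 1), C (c i) * X ^ i).leadingCoeff = c n := by
  rw [Polynomial.leadingCoeff, natdeg_sumpoly n c hc, coeff_sumpoly]; simp

private lemma eval_sumpoly (n : ℕ) (c : ℕ → ℝ) (x : ℝ) :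
    (∑ i ∈ Finset.range (n + 1), C (c i) * X ^ i).eval x =
      ∑ i ∈ Finset.range (n + 1), c i * x ^ i := by
  simp [Polynomial.eval_finset_sum]

private lemma eval_map_sumpoly (n : ℕ) (c : ℕ → ℝ) (z : ℂ) :
    ((∑ i ∈ Finset.range (n + 1), C (c i) * X ^ i).map (algebraMap ℝ ℂ)).eval z =
      ∑ i ∈ Finset.range (n + 1), (c i : ℂ) * z ^ i := by
  simp [Polynomial.map_sum, Polynomial.eval_finset_sum]

private lemma pow_card_le_prod {α : Type*} (s : Multiset α) (f : α → ℝ) (d : ℝ)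
    (hd : 0 ≤ d) (h : ∀ r ∈ s, d ≤ f r) :
    d ^ Multiset.card s ≤ (s.map f).prod := by
  have := Multiset.prod_map_le_prod_map₀ (fun _ => d) f (fun i _ => hd) h
  simpa using this

private lemma abs_eval_ge (p : ℝ[X]) (hs : Splits p) (z : ℂ) :
    |p.leadingCoeff| * |z.im| ^ p.natDegree ≤
      ‖(p.map (algebraMap ℝ ℂ)).eval z‖ := by
  by_cases hp0 : p = 0
  · simp [hp0]
  conv_rhs => rw [hs.eq_prod_roots]
  rw [Polynomial.map_mul, Polynomial.map_multiset_prod, Polynomial.eval_mul,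
    Polynomial.eval_multiset_prod, norm_mul,
    show ∀ s : Multiset ℂ, ‖s.prod‖ = (s.map (fun y => ‖y‖)).prod from fun s =>
      map_multiset_prod (normHom : ℂ →*₀ ℝ) s]
  simp only [Polynomial.map_C, Polynomial.eval_C, Multiset.map_map, Function.comp,
    Polynomial.map_sub, Polynomial.map_X, Polynomial.eval_sub, Polynomial.eval_X]
  rw [show ‖(algebraMap ℝ ℂ) p.leadingCoeff‖ = |p.leadingCoeff| from
    (Complex.norm_real _).trans (Real.norm_eq_abs _)]
  refine mul_le_mul_of_nonneg_left ?_ (abs_nonneg _)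
  rw [← Polynomial.splits_iff_card_roots.mp hs]
  apply pow_card_le_prod _ _ _ (abs_nonneg _)
  intro r _
  calc |z.im| = |(z - (algebraMap ℝ ℂ) r).im| := by simp
    _ ≤ ‖z - (algebraMap ℝ ℂ) r‖ := Complex.abs_im_le_norm _

private lemma splits_of_roots_real (p : ℝ[X])
    (h : ∀ z ∈ (p.map (algebraMap ℝ ℂ)).roots, z.im = 0) :
    Splits p := by
  suffices H : ∀ n : ℕ, ∀ p : ℝ[X], p.natDegree = n →
      (∀ z ∈ (p.map (algebraMap ℝ ℂ)).roots, z.im = 0) → Splits p from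
    H p.natDegree p rfl h
  clear h p
  intro n
  induction n using Nat.strong_induction_on with
  | _ n ih =>
  intro p hn h
  subst hn
  rcases le_or_gt p.natDegree 1 with h1 | h1
  · exact Splits.of_natDegree_le_one h1
  have hp0 : p ≠ 0 := fun h0 => by simp [h0] at h1
  have hmap0 : p.map (algebraMap ℝ ℂ) ≠ 0 :=
    (Polynomial.map_ne_zero_iff (algebraMap ℝ ℂ).injective).mpr hp0
  obtain ⟨z, hz⟩ := Complex.exists_root (f := p.map (algebraMap ℝ ℂ)) (by
    rw [Polynomial.degree_map_eq_of_injective (algebraMap ℝ ℂ).injective,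
      Polynomial.degree_eq_natDegree hp0]
    exact_mod_cast Nat.lt_of_lt_of_le Nat.zero_lt_one h1.le)
  have hzr : z ∈ (p.map (algebraMap ℝ ℂ)).roots := by
    rw [Polynomial.mem_roots hmap0]; exact hz
  have him : z.im = 0 := h z hzr
  set x : ℝ := z.re with hx
  have hzx : z = (algebraMap ℝ ℂ) x := by
    apply Complex.ext <;> simp [him, hx]
  have hroot : p.IsRoot x := by
    have := hz
    rw [hzx, Polynomial.IsRoot, Polynomial.eval_map, Polynomial.eval₂_at_apply] at this
    exact (_root_.map_eq_zero (algebraMap ℝ ℂ)).mp this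
  obtain ⟨q, hq⟩ := (Polynomial.dvd_iff_isRoot).mpr hroot
  have hq0 : q ≠ 0 := fun h0 => hp0 (by simp [hq, h0])
  have hdq : q.natDegree < p.natDegree := by
    have := Polynomial.natDegree_mul (Polynomial.X_sub_C_ne_zero x) hq0
    rw [← hq, Polynomial.natDegree_X_sub_C] at this
    omega
  have hqsplits : Splits q := by
    apply ih _ hdq q rfl
    intro w hw
    apply h
    refine Multiset.subset_of_le (Polynomial.roots.le_of_dvd hmap0 ?_) hw
    exact Polynomial.map_dvd _ (Dvd.intro_left _ hq.symm)
  rw [hq]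
  exact (Splits.X_sub_C _).mul hqsplits

private lemma abs_eval_ge_real (p : ℝ[X]) (hs : Splits p)
    (hroots : ∀ r ∈ p.roots, 0 ≤ r) (x : ℝ) (hx : x ≤ 0) :
    |p.leadingCoeff| * |x| ^ p.natDegree ≤ |p.eval x| := by
  by_cases hp0 : p = 0
  · simp [hp0]
  conv_rhs => rw [hs.eq_prod_roots]
  rw [Polynomial.eval_mul, Polynomial.eval_multiset_prod, Polynomial.eval_C, abs_mul,
    show ∀ s : Multiset ℝ, |s.prod| = (s.map (fun y => |y|)).prod from fun s =>
      map_multiset_prod (absHom.toMonoidHom : ℝ →* ℝ) s]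
  simp only [Multiset.map_map, Function.comp, Polynomial.eval_sub, Polynomial.eval_X,
    Polynomial.eval_C]
  refine mul_le_mul_of_nonneg_left ?_ (abs_nonneg _)
  rw [← Polynomial.splits_iff_card_roots.mp hs]
  apply pow_card_le_prod _ _ _ (abs_nonneg _)
  intro r hr
  have h0r : 0 ≤ r := hroots r hr
  rw [abs_of_nonpos hx, abs_of_nonpos (by linarith)]
  linarith

theorem stmt18 (n : ℕ) (a : ℕ → ℕ → ℝ) (b : ℕ → ℝ)
    (hdeg : ∀ k, a k n ≠ 0)
    (hconv : ∀ i, i ≤ n → Filter.Tendsto (fun k => a k i) Filter.atTop (nhds (b i)))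
    (hbn : b n ≠ 0)
    (hsplits : ∀ k, Splits
      ((∑ i ∈ Finset.range (n + 1), C (a k i) * X ^ i).map (RingHom.id ℝ))) :
    Splits ((∑ i ∈ Finset.range (n + 1), C (b i) * X ^ i).map (RingHom.id ℝ)) ∧
    ((∀ k, ∀ x ∈ (∑ i ∈ Finset.range (n + 1), C (a k i) * X ^ i).roots, 0 ≤ x) →
      ∀ x ∈ (∑ i ∈ Finset.range (n + 1), C (b i) * X ^ i).roots, 0 ≤ x) := by
  simp only [Polynomial.map_id] at hsplits ⊢
  set P : ℕ → ℝ[X] := fun k => ∑ i ∈ Finset.range (n + 1), C (a k i) * X ^ i with hP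
  set Q : ℝ[X] := ∑ i ∈ Finset.range (n + 1), C (b i) * X ^ i with hQ
  -- limit of evaluations
  have hevalC : ∀ z : ℂ, Filter.Tendsto (fun k => ((P k).map (algebraMap ℝ ℂ)).eval z)
      Filter.atTop (nhds ((Q.map (algebraMap ℝ ℂ)).eval z)) := by
    intro z
    simp only [hP, hQ, eval_map_sumpoly]
    apply tendsto_finset_sum
    intro i hi
    exact ((Complex.continuous_ofReal.tendsto _).comp
      (hconv i (Nat.lt_succ_iff.mp (Finset.mem_range.mp hi)))).mul_const _
  -- key limiting inequality
  have hkey : ∀ z : ℂ, |b n| * |z.im| ^ n ≤ ‖(Q.map (algebraMap ℝ ℂ)).eval z‖ := by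
    intro z
    refine le_of_tendsto_of_tendsto' (f := fun k => |a k n| * |z.im| ^ n)
      (g := fun k => ‖((P k).map (algebraMap ℝ ℂ)).eval z‖)
      (((hconv n le_rfl).abs).mul_const _)
      ((continuous_norm.tendsto _).comp (hevalC z)) ?_
    intro k
    have := abs_eval_ge (P k) (hsplits k) z
    rwa [lc_sumpoly n (a k) (hdeg k), natdeg_sumpoly n (a k) (hdeg k)] at this
  have hQ0 : Q ≠ 0 := fun h0 => by
    have := coeff_sumpoly n b n
    rw [← hQ, h0] at this
    simp at this
    exact hbn this.symm
  have hbn' : 0 < |b n| := abs_pos.mpr hbn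
  constructor
  · apply splits_of_roots_real
    intro z hz
    have hmap0 : Q.map (algebraMap ℝ ℂ) ≠ 0 :=
      (Polynomial.map_ne_zero_iff (algebraMap ℝ ℂ).injective).mpr hQ0
    have hz0 : ((Q.map (algebraMap ℝ ℂ)).eval z) = 0 := (Polynomial.mem_roots hmap0).mp hz
    have := hkey z
    rw [hz0, norm_zero] at this
    have him : |z.im| ^ n = 0 := le_antisymm (by nlinarith) (pow_nonneg (abs_nonneg _) n)
    rcases Nat.eq_zero_or_pos n with h0 | h0
    · rw [h0] at him; norm_num at him
    · have := pow_eq_zero_iff (n := n) (by omega) |>.mp him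
      exact abs_eq_zero.mp this
  · intro hk x hx
    by_contra hneg
    push_neg at hneg
    have hx0 : Q.eval x = 0 := (Polynomial.mem_roots hQ0).mp hx
    -- limiting inequality over ℝ at x
    have hevalR : Filter.Tendsto (fun k => (P k).eval x) Filter.atTop (nhds (Q.eval x)) := by
      simp only [hP, hQ, eval_sumpoly]
      apply tendsto_finset_sum
      intro i hi
      exact (hconv i (Nat.lt_succ_iff.mp (Finset.mem_range.mp hi))).mul_const _
    have hineq : |b n| * |x| ^ n ≤ |Q.eval x| := by
      refine le_of_tendsto_of_tendsto' (f := fun k => |a k n| * |x| ^ n)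
        (g := fun k => |(P k).eval x|)
        (((hconv n le_rfl).abs).mul_const _) hevalR.abs ?_
      intro k
      have := abs_eval_ge_real (P k) (hsplits k) (hk k) x hneg.le
      rwa [lc_sumpoly n (a k) (hdeg k), natdeg_sumpoly n (a k) (hdeg k)] at this
    rw [hx0, abs_zero] at hineq
    have hxpos : 0 < |x| ^ n := pow_pos (abs_pos.mpr hneg.ne) n
    nlinarith
end
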